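/- arXiv:1401.7023 — 7 statements merged into one kernel-verified Lean document; each statement's English description precedes it below -/
import Mathlib

section
/- Let Γ be a template of cogenus δ and length ℓ. Then for every i = 1,…,ℓ, one has λ̄_i(Γ) ≤ min{δ, δ−(ℓ−i)+ε_1(Γ), δ+1−i+ε_0(Γ)}. -/
open scoped Classical

/-- A long-edge graph: a finite multiset of weighted edges `(i, (j, ρ))` (an edge from `i`
to `j` of weight `ρ`) on the vertex set `ℕ`, with `i < j`, `ρ ≥ 1`, and no edge of
weight `1` connecting consecutive vertices. -/
structure LongEdgeGraph where
  edges : Multiset (ℕ × ℕ × ℕ)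
  valid : ∀ e ∈ edges, e.1 < e.2.1 ∧ 1 ≤ e.2.2 ∧ ¬(e.2.1 = e.1 + 1 ∧ e.2.2 = 1)

namespace LongEdgeGraph

/-- The cogenus `δ(G) = ∑_e (ℓ(e)·ρ(e) − 1)`, where `ℓ(e)` is the length of `e`. -/
def cogenus (G : LongEdgeGraph) : ℕ :=
  (G.edges.map fun e => (e.2.1 - e.1) * e.2.2 - 1).sum

/-- The multiplicity `μ(G) = ∏_e ρ(e)^2`. -/
def mult (G : LongEdgeGraph) : ℕ :=
  (G.edges.map fun e => e.2.2 ^ 2).prod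

/-- `λ_j(G)`: the sum of the weights of the edges from `i` to `k` with `i < j ≤ k`. -/
def lam (G : LongEdgeGraph) (j : ℕ) : ℕ :=
  ((G.edges.filter fun e => e.1 < j ∧ j ≤ e.2.1).map fun e => e.2.2).sum

/-- `λ̄_j(G) = λ_j(G)` minus the number of edges of `G` from `j−1` to `j`. -/
def lambar (G : LongEdgeGraph) (j : ℕ) : ℕ :=
  G.lam j - Multiset.card (G.edges.filter fun e => e.1 + 1 = j ∧ e.2.1 = j)

/-- The set of vertices of `G` with nonzero degree. -/
def verts (G : LongEdgeGraph) : Set ℕ :=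
  {v | ∃ e ∈ G.edges, e.1 = v ∨ e.2.1 = v}

/-- `minv(G)`: the smallest vertex of `G` with nonzero degree. -/
noncomputable def minv (G : LongEdgeGraph) : ℕ := sInf G.verts

/-- `maxv(G)`: the largest vertex of `G` with nonzero degree. -/
noncomputable def maxv (G : LongEdgeGraph) : ℕ := sSup G.verts

/-- The length `ℓ(G) = maxv(G) − minv(G)`. -/
noncomputable def lengthG (G : LongEdgeGraph) : ℕ := G.maxv - G.minv

/-- `ε_0(G)`: `1` if every edge incident to `minv(G)` has weight `1`, and `0` otherwise. -/
noncomputable def eps0 (G : LongEdgeGraph) : ℕ :=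
  if ∀ e ∈ G.edges, (e.1 = G.minv ∨ e.2.1 = G.minv) → e.2.2 = 1 then 1 else 0

/-- `ε_1(G)`: `1` if every edge incident to `maxv(G)` has weight `1`, and `0` otherwise. -/
noncomputable def eps1 (G : LongEdgeGraph) : ℕ :=
  if ∀ e ∈ G.edges, (e.1 = G.maxv ∨ e.2.1 = G.maxv) → e.2.2 = 1 then 1 else 0

/-- A template: `minv(Γ) = 0` and every vertex `i` with `1 ≤ i ≤ ℓ(Γ) − 1` is strictly
covered by some edge from `j` to `k` with `j < i < k`. -/
def IsTemplate (G : LongEdgeGraph) : Prop :=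
  G.minv = 0 ∧ ∀ i, 1 ≤ i → i + 1 ≤ G.lengthG → ∃ e ∈ G.edges, e.1 < i ∧ i < e.2.1

/-- The shift `G_{(k)}` of a long-edge graph: every edge is moved `k` units to the right. -/
def shiftG (G : LongEdgeGraph) (k : ℕ) : LongEdgeGraph where
  edges := G.edges.map fun e => (e.1 + k, e.2.1 + k, e.2.2)
  valid := by
    intro e he
    rw [Multiset.mem_map] at he
    obtain ⟨a, ha, rfl⟩ := he
    obtain ⟨h1, h2, h3⟩ := G.valid a ha
    dsimp only
    refine ⟨by omega, h2, ?_⟩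
    rintro ⟨hc1, hc2⟩
    exact h3 ⟨by omega, hc2⟩

end LongEdgeGraph

namespace LEGAux

def contribZ (e : ℕ × ℕ × ℕ) : ℤ := ((e.2.1 : ℤ) - (e.1 : ℤ)) * (e.2.2 : ℤ) - 1

noncomputable def wZ (i : ℕ) (e : ℕ × ℕ × ℕ) : ℤ :=
  if e.1 < i ∧ i ≤ e.2.1 then
    (if e.1 + 1 = i ∧ e.2.1 = i then (e.2.2 : ℤ) - 1 else (e.2.2 : ℤ)) else 0

lemma cast_map_sum (s : Multiset (ℕ × ℕ × ℕ)) (f : ℕ × ℕ × ℕ → ℕ) :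
    (((s.map f).sum : ℕ) : ℤ) = (s.map fun e => (f e : ℤ)).sum := by
  induction s using Multiset.induction_on with
  | empty => simp
  | cons a s ih => simp [Multiset.map_cons, Multiset.sum_cons, ih]

lemma filter_map_sum (s : Multiset (ℕ × ℕ × ℕ)) (p : ℕ × ℕ × ℕ → Prop) [DecidablePred p]
    (f : ℕ × ℕ × ℕ → ℕ) :
    ((s.filter p).map f).sum = (s.map fun a => if p a then f a else 0).sum := by
  induction s using Multiset.induction_on with
  | empty => simp
  | cons a s ih =>
    by_cases h : p a <;> simp [Multiset.filter_cons, h, ih]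

lemma card_filter_eq_sum (s : Multiset (ℕ × ℕ × ℕ)) (p : ℕ × ℕ × ℕ → Prop) [DecidablePred p] :
    (Multiset.card (s.filter p)) = (s.map fun a => if p a then 1 else 0).sum := by
  induction s using Multiset.induction_on with
  | empty => simp
  | cons a s ih =>
    by_cases h : p a <;> simp [Multiset.filter_cons, h, ih] <;> omega

lemma swap_sum (s : Multiset (ℕ × ℕ × ℕ)) (F : Finset ℕ) (f : ℕ → ℕ × ℕ × ℕ → ℤ) :
    (s.map fun e => ∑ v ∈ F, f v e).sum = ∑ v ∈ F, (s.map (f v)).sum := by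
  induction s using Multiset.induction_on with
  | empty => simp
  | cons a s ih => simp [Multiset.map_cons, Multiset.sum_cons, ih, Finset.sum_add_distrib]

lemma cover_sum (E : Multiset (ℕ × ℕ × ℕ)) (g : ℕ × ℕ × ℕ → ℤ) (s t : ℕ)
    (hcov : ∀ v, s ≤ v → v < t → ∃ e ∈ E, e.1 < v ∧ v < e.2.1)
    (hg : ∀ e ∈ E, (((Finset.Ico s t).filter fun v => e.1 < v ∧ v < e.2.1).card : ℤ) ≤ g e) :
    ((t : ℤ) - (s : ℤ)) ≤ (E.map g).sum := by
  have h1 : ((t : ℤ) - s) ≤ ((Finset.Ico s t).card : ℤ) := by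
    rw [Nat.card_Ico]; omega
  have h2 : ∀ v ∈ Finset.Ico s t,
      (1 : ℤ) ≤ (E.map fun e => if e.1 < v ∧ v < e.2.1 then (1 : ℤ) else 0).sum := by
    intro v hv
    rw [Finset.mem_Ico] at hv
    obtain ⟨e, he, hcov'⟩ := hcov v hv.1 hv.2
    have hmem : (if e.1 < v ∧ v < e.2.1 then (1 : ℤ) else 0) ∈
        E.map fun e => if e.1 < v ∧ v < e.2.1 then (1 : ℤ) else 0 :=
      Multiset.mem_map_of_mem _ he
    have := Multiset.single_le_sum
      (s := E.map fun e => if e.1 < v ∧ v < e.2.1 then (1 : ℤ) else 0)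
      (by intro x hx; rw [Multiset.mem_map] at hx; obtain ⟨a, _, rfl⟩ := hx
          split <;> norm_num) _ hmem
    rwa [if_pos hcov'] at this
  have h3 : ((Finset.Ico s t).card : ℤ) ≤
      ∑ v ∈ Finset.Ico s t, (E.map fun e => if e.1 < v ∧ v < e.2.1 then (1 : ℤ) else 0).sum := by
    calc ((Finset.Ico s t).card : ℤ) = ∑ _v ∈ Finset.Ico s t, (1 : ℤ) := by simp
    _ ≤ _ := Finset.sum_le_sum h2
  have h4 : ∑ v ∈ Finset.Ico s t, (E.map fun e => if e.1 < v ∧ v < e.2.1 then (1 : ℤ) else 0).sum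
      = (E.map fun e => (((Finset.Ico s t).filter fun v => e.1 < v ∧ v < e.2.1).card : ℤ)).sum := by
    rw [← swap_sum]
    congr 1
    apply Multiset.map_congr rfl
    intro e _
    rw [Finset.sum_boole]
  have h5 := Multiset.sum_map_le_sum_map
    (s := E) (fun e => (((Finset.Ico s t).filter fun v => e.1 < v ∧ v < e.2.1).card : ℤ)) g hg
  calc ((t : ℤ) - s) ≤ _ := h1
  _ ≤ _ := h3
  _ = _ := h4
  _ ≤ _ := h5

lemma cov_le1 (s t a k : ℕ) :
    (((Finset.Ico s t).filter fun v => a < v ∧ v < k).card) ≤ k - (a + 1) := by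
  calc _ ≤ (Finset.Ico (a+1) k).card := by
        apply Finset.card_le_card
        intro v hv
        simp only [Finset.mem_filter, Finset.mem_Ico] at *
        omega
  _ = k - (a + 1) := Nat.card_Ico _ _

lemma cov_le2 (s t a k : ℕ) :
    (((Finset.Ico s t).filter fun v => a < v ∧ v < k).card) ≤ t - (a + 1) := by
  calc _ ≤ (Finset.Ico (a+1) t).card := by
        apply Finset.card_le_card
        intro v hv
        simp only [Finset.mem_filter, Finset.mem_Ico] at *
        omega
  _ = t - (a + 1) := Nat.card_Ico _ _

lemma cov_le3 (s t a k : ℕ) :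
    (((Finset.Ico s t).filter fun v => a < v ∧ v < k).card) ≤ k - s := by
  calc _ ≤ (Finset.Ico s k).card := by
        apply Finset.card_le_card
        intro v hv
        simp only [Finset.mem_filter, Finset.mem_Ico] at *
        omega
  _ = k - s := Nat.card_Ico _ _

lemma gp (i s t a k ρ : ℕ) (hak : a < k) (hρ : 1 ≤ ρ)
    (hne : ¬(k = a + 1 ∧ ρ = 1))
    (hcase : (t ≤ i ∧ ¬(k = i ∧ ρ = 1 ∧ a < i)) ∨ (t + 1 ≤ i)
      ∨ (i ≤ s ∧ ¬(a + 1 = i ∧ ρ = 1 ∧ i ≤ k)) ∨ (i + 1 ≤ s)) :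
    (((Finset.Ico s t).filter fun v => a < v ∧ v < k).card : ℤ)
      ≤ contribZ (a, k, ρ) - wZ i (a, k, ρ) := by
  have hc1 := cov_le1 s t a k
  have hc2 := cov_le2 s t a k
  have hc3 := cov_le3 s t a k
  set c := ((Finset.Ico s t).filter fun v => a < v ∧ v < k).card with hc
  unfold contribZ wZ
  simp only
  split_ifs with hcr hsh
  · have hd : (k : ℤ) - a = 1 := by omega
    rw [hd, one_mul]
    have : c = 0 := by omega
    omega
  · have hd2 : a + 2 ≤ k := by omega
    by_cases hρ2 : 2 ≤ ρ
    · have h1 : (1:ℤ) ≤ (k:ℤ) - a - 1 := by omega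
      have h2 : (1:ℤ) ≤ (ρ:ℤ) - 1 := by omega
      have key : (1:ℤ) ≤ ((k:ℤ) - a - 1) * ((ρ:ℤ) - 1) := by nlinarith
      have hcz : (c:ℤ) ≤ (k:ℤ) - a - 1 := by omega
      nlinarith
    · have hρ1 : ρ = 1 := by omega
      subst hρ1
      push_cast
      rw [mul_one]
      omega
  · have hcz : (c:ℤ) ≤ (k:ℤ) - a - 1 := by omega
    have h1 : (1:ℤ) ≤ (ρ:ℤ) := by omega
    have h0 : (0:ℤ) ≤ (k:ℤ) - a := by omega
    nlinarith

lemma gpf_left (i t k ρ : ℕ) (hk : 1 ≤ k) (hρ : 2 ≤ ρ) (ht : t + 1 ≤ i) (hi : 2 ≤ i) :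
    (((Finset.Ico 1 t).filter fun v => 0 < v ∧ v < k).card : ℤ) + 1
      ≤ contribZ (0, k, ρ) - wZ i (0, k, ρ) := by
  have hc1 := cov_le1 1 t 0 k
  have hc2 := cov_le2 1 t 0 k
  set c := ((Finset.Ico 1 t).filter fun v => 0 < v ∧ v < k).card with hc
  unfold contribZ wZ
  simp only
  split_ifs with hcr hsh
  · omega
  · have hki : i ≤ k := hcr.2
    have hcz : (c:ℤ) ≤ (i:ℤ) - 2 := by omega
    have h1 : (2:ℤ) ≤ (k:ℤ) := by omega
    have h2 : (2:ℤ) ≤ (ρ:ℤ) := by omega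
    have hik : (i:ℤ) ≤ (k:ℤ) := by omega
    push_cast
    nlinarith
  · have hcz : (c:ℤ) ≤ (k:ℤ) - 1 := by omega
    have h2 : (2:ℤ) ≤ (ρ:ℤ) := by omega
    have h1 : (1:ℤ) ≤ (k:ℤ) := by omega
    push_cast
    nlinarith

lemma gpf_right (i s L a ρ : ℕ) (ha : a < L) (hρ : 2 ≤ ρ) (hs : i + 1 ≤ s) (hL : i + 1 ≤ L) :
    (((Finset.Ico s L).filter fun v => a < v ∧ v < L).card : ℤ) + 1
      ≤ contribZ (a, L, ρ) - wZ i (a, L, ρ) := by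
  have hc1 := cov_le1 s L a L
  have hc3 := cov_le3 s L a L
  set c := ((Finset.Ico s L).filter fun v => a < v ∧ v < L).card with hc
  unfold contribZ wZ
  simp only
  split_ifs with hcr hsh
  · omega
  · have hai : a < i := hcr.1
    have hcz : (c:ℤ) ≤ (L:ℤ) - a - 2 := by omega
    have h1 : (2:ℤ) ≤ (L:ℤ) - a := by omega
    have h2 : (2:ℤ) ≤ (ρ:ℤ) := by omega
    nlinarith
  · have hcz : (c:ℤ) ≤ (L:ℤ) - a - 1 := by omega
    have h2 : (2:ℤ) ≤ (ρ:ℤ) := by omega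
    have h1 : (1:ℤ) ≤ (L:ℤ) - a := by omega
    nlinarith

lemma cogenusZ (G : LongEdgeGraph) : (G.cogenus : ℤ) = (G.edges.map contribZ).sum := by
  unfold LongEdgeGraph.cogenus
  rw [cast_map_sum]
  congr 1
  apply Multiset.map_congr rfl
  intro e he
  obtain ⟨h1, h2, _⟩ := G.valid e he
  unfold contribZ
  have hge : 1 ≤ (e.2.1 - e.1) * e.2.2 := by
    have : 1 ≤ e.2.1 - e.1 := by omega
    exact Nat.one_le_iff_ne_zero.mpr (by positivity)
  rw [Nat.cast_sub hge, Nat.cast_mul, Nat.cast_sub h1.le]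
  norm_num

lemma lambarZ (G : LongEdgeGraph) (i : ℕ) :
    (G.lambar i : ℤ) ≤ (G.edges.map (wZ i)).sum := by
  classical
  set wN : ℕ × ℕ × ℕ → ℕ := fun e =>
    if e.1 < i ∧ i ≤ e.2.1 then
      (if e.1 + 1 = i ∧ e.2.1 = i then e.2.2 - 1 else e.2.2) else 0 with hwN
  have step1 : G.lam i ≤ (G.edges.map wN).sum
      + Multiset.card (G.edges.filter fun e => e.1 + 1 = i ∧ e.2.1 = i) := by
    unfold LongEdgeGraph.lam
    rw [filter_map_sum, card_filter_eq_sum, ← Multiset.sum_map_add]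
    apply Multiset.sum_map_le_sum_map
    intro e _
    simp only [hwN]
    split_ifs with h1 h2 h3 <;> omega
  have step2 : G.lambar i ≤ (G.edges.map wN).sum := by
    unfold LongEdgeGraph.lambar
    omega
  calc (G.lambar i : ℤ) ≤ ((G.edges.map wN).sum : ℤ) := by exact_mod_cast step2
  _ = (G.edges.map fun e => ((wN e : ℕ) : ℤ)).sum := cast_map_sum _ _
  _ = (G.edges.map (wZ i)).sum := by
      congr 1
      apply Multiset.map_congr rfl
      intro e he
      obtain ⟨h1, h2, _⟩ := G.valid e he
      simp only [hwN]
      unfold wZ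
      split_ifs with hA hB
      · rw [Nat.cast_sub h2]
        norm_num
      · norm_num
      · norm_num

end LEGAux

/-- if `Γ` is a template of cogenus `δ` and length `ℓ`, then for every
`i = 1, …, ℓ` one has `λ̄_i(Γ) ≤ min {δ, δ − (ℓ − i) + ε_1(Γ), δ + 1 − i + ε_0(Γ)}`. -/
theorem template_lambar_bound (Γ : LongEdgeGraph) (hΓ : Γ.IsTemplate)
    (δ ℓ : ℕ) (hδ : Γ.cogenus = δ) (hℓ : Γ.lengthG = ℓ)
    (i : ℕ) (hi1 : 1 ≤ i) (hiℓ : i ≤ ℓ) :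
    (Γ.lambar i : ℤ) ≤
      min (δ : ℤ)
        (min ((δ : ℤ) - ((ℓ : ℤ) - (i : ℤ)) + (Γ.eps1 : ℤ))
          ((δ : ℤ) + 1 - (i : ℤ) + (Γ.eps0 : ℤ))) := by
  obtain ⟨hmin, hcov⟩ := hΓ
  subst hδ hℓ
  have hval := Γ.valid
  set L := Γ.lengthG with hLdef
  have hbdd : BddAbove Γ.verts := by
    refine ⟨(Γ.edges.map fun e => e.2.1).sum, ?_⟩
    rintro v ⟨e, he, hv⟩
    have h2 : e.2.1 ≤ (Γ.edges.map fun e => e.2.1).sum :=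
      Multiset.single_le_sum (fun x _ => Nat.zero_le x) _ (Multiset.mem_map_of_mem _ he)
    have h1 := (Γ.valid e he).1
    rcases hv with rfl | rfl
    · omega
    · exact h2
  have hmaxle : ∀ e ∈ Γ.edges, e.2.1 ≤ Γ.maxv := fun e he =>
    le_csSup hbdd ⟨e, he, Or.inr rfl⟩
  have hlen : Γ.maxv = L := by
    rw [hLdef]
    unfold LongEdgeGraph.lengthG
    rw [hmin]
    omega
  have hDelta : (Γ.cogenus : ℤ) = (Γ.edges.map LEGAux.contribZ).sum := LEGAux.cogenusZ Γ
  have hW : (Γ.lambar i : ℤ) ≤ (Γ.edges.map (LEGAux.wZ i)).sum := LEGAux.lambarZ Γ i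
  have hsub : (Γ.edges.map fun e => LEGAux.contribZ e - LEGAux.wZ i e).sum
      = (Γ.edges.map LEGAux.contribZ).sum - (Γ.edges.map (LEGAux.wZ i)).sum :=
    Multiset.sum_map_sub
  -- Claim 1 : 0 ≤ ∑ g
  have key1 : (0:ℤ) ≤ (Γ.edges.map fun e => LEGAux.contribZ e - LEGAux.wZ i e).sum := by
    have h := LEGAux.cover_sum Γ.edges (fun e => LEGAux.contribZ e - LEGAux.wZ i e) 0 0
      (by intro v h1 h2; omega)
      (by intro e he
          obtain ⟨a, k, ρ⟩ := e
          obtain ⟨h1, h2, h3⟩ := hval _ he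
          exact LEGAux.gp i 0 0 a k ρ h1 h2 h3 (Or.inr (Or.inl (by omega))))
    simpa using h
  have heps0_nonneg : (0:ℤ) ≤ (Γ.eps0 : ℤ) := by positivity
  have heps1_nonneg : (0:ℤ) ≤ (Γ.eps1 : ℤ) := by positivity
  -- Claim 3 : i - 1 - eps0 ≤ ∑ g
  have key3 : ((i:ℤ) - 1 - (Γ.eps0 : ℤ)) ≤
      (Γ.edges.map fun e => LEGAux.contribZ e - LEGAux.wZ i e).sum := by
    by_cases hbad : ∃ b ∈ Γ.edges, b.2.1 = i ∧ b.2.2 = 1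
    · obtain ⟨b, hbE, hbk, hbρ⟩ := hbad
      obtain ⟨hb1, hb2, hb3⟩ := hval _ hbE
      have hab : b.1 + 2 ≤ i := by omega
      have hrest : Γ.edges = b ::ₘ Γ.edges.erase b := (Multiset.cons_erase hbE).symm
      have hgb : LEGAux.contribZ b - LEGAux.wZ i b = (i:ℤ) - b.1 - 2 := by
        unfold LEGAux.contribZ LEGAux.wZ
        rw [hbk, hbρ]
        rw [if_pos ⟨by omega, le_refl i⟩, if_neg (by omega)]
        push_cast
        ring
      have hcov' : ∀ v, 1 ≤ v → v < b.1 + 1 →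
          ∃ e ∈ Γ.edges.erase b, e.1 < v ∧ v < e.2.1 := by
        intro v hv1 hv2
        obtain ⟨e, he, hc⟩ := hcov v hv1 (by omega)
        refine ⟨e, (Multiset.mem_erase_of_ne ?_).2 he, hc⟩
        intro hEq
        rw [hEq] at hc
        omega
      by_cases heps : ∀ e ∈ Γ.edges, (e.1 = Γ.minv ∨ e.2.1 = Γ.minv) → e.2.2 = 1
      · have heps1 : Γ.eps0 = 1 := by unfold LongEdgeGraph.eps0; rw [if_pos heps]
        have hsum' : (((b.1 + 1 : ℕ) : ℤ) - ((1:ℕ) : ℤ)) ≤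
            ((Γ.edges.erase b).map fun e => LEGAux.contribZ e - LEGAux.wZ i e).sum :=
          LEGAux.cover_sum (Γ.edges.erase b)
            (fun e => LEGAux.contribZ e - LEGAux.wZ i e) 1 (b.1 + 1) hcov'
            (by intro e he
                obtain ⟨a, k, ρ⟩ := e
                obtain ⟨h1, h2, h3⟩ := hval _ (Multiset.mem_of_mem_erase he)
                exact LEGAux.gp i 1 (b.1+1) a k ρ h1 h2 h3 (Or.inr (Or.inl (by omega))))
        rw [hrest, Multiset.map_cons, Multiset.sum_cons, hgb, heps1]
        push_cast at hsum' ⊢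
        linarith
      · have heps0 : Γ.eps0 = 0 := by unfold LongEdgeGraph.eps0; rw [if_neg heps]
        push_neg at heps
        obtain ⟨f, hfE, hf0, hfρ⟩ := heps
        obtain ⟨hfv1, hfv2, _⟩ := hval _ hfE
        have hf1 : f.1 = 0 := by rw [hmin] at hf0; omega
        have hfρ2 : 2 ≤ f.2.2 := by omega
        have hfb : f ≠ b := by intro h; rw [h] at hfρ2; omega
        have hfE' : f ∈ Γ.edges.erase b := (Multiset.mem_erase_of_ne hfb).2 hfE
        obtain ⟨fa, fk, fρ⟩ := f
        simp only at hf1 hfρ2 hfv1 hfv2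
        subst hf1
        have hsum' : (((b.1 + 1 : ℕ) : ℤ) - ((1:ℕ) : ℤ)) ≤
            ((Γ.edges.erase b).map fun e =>
              (LEGAux.contribZ e - LEGAux.wZ i e) - (if e = (0, fk, fρ) then 1 else 0)).sum :=
          LEGAux.cover_sum (Γ.edges.erase b)
            (fun e => (LEGAux.contribZ e - LEGAux.wZ i e) - (if e = (0, fk, fρ) then 1 else 0))
            1 (b.1 + 1) hcov'
            (by intro e he
                by_cases hef : e = (0, fk, fρ)
                · subst hef
                  rw [if_pos rfl]
                  have h := LEGAux.gpf_left i (b.1+1) fk fρ (by omega) hfρ2 (by omega) (by omega)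
                  exact le_sub_iff_add_le.mpr h
                · rw [if_neg hef, sub_zero]
                  obtain ⟨a, k, ρ⟩ := e
                  obtain ⟨h1, h2, h3⟩ := hval _ (Multiset.mem_of_mem_erase he)
                  exact LEGAux.gp i 1 (b.1+1) a k ρ h1 h2 h3 (Or.inr (Or.inl (by omega))))
        have hind : (1:ℤ) ≤ ((Γ.edges.erase b).map fun e =>
            (if e = (0, fk, fρ) then (1:ℤ) else 0)).sum := by
          have hmem : (if ((0:ℕ), fk, fρ) = ((0:ℕ), fk, fρ) then (1:ℤ) else 0) ∈
              (Γ.edges.erase b).map fun e => (if e = (0, fk, fρ) then (1:ℤ) else 0) :=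
            Multiset.mem_map_of_mem _ hfE'
          have h := Multiset.single_le_sum
            (s := (Γ.edges.erase b).map fun e => (if e = (0, fk, fρ) then (1:ℤ) else 0))
            (by intro x hx; rw [Multiset.mem_map] at hx; obtain ⟨a, _, rfl⟩ := hx
                split <;> norm_num) _ hmem
          rwa [if_pos rfl] at h
        have hsplit : ((Γ.edges.erase b).map fun e =>
              (LEGAux.contribZ e - LEGAux.wZ i e) - (if e = (0, fk, fρ) then 1 else 0)).sum
            = ((Γ.edges.erase b).map fun e => LEGAux.contribZ e - LEGAux.wZ i e).sum
              - ((Γ.edges.erase b).map fun e => (if e = (0, fk, fρ) then (1:ℤ) else 0)).sum :=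
          Multiset.sum_map_sub
        rw [hrest, Multiset.map_cons, Multiset.sum_cons, hgb, heps0]
        rw [hsplit] at hsum'
        push_cast at hsum' ⊢
        linarith
    · have hsum' := LEGAux.cover_sum Γ.edges (fun e => LEGAux.contribZ e - LEGAux.wZ i e) 1 i
        (fun v hv1 hv2 => hcov v hv1 (by omega))
        (by intro e he
            obtain ⟨a, k, ρ⟩ := e
            obtain ⟨h1, h2, h3⟩ := hval _ he
            refine LEGAux.gp i 1 i a k ρ h1 h2 h3 (Or.inl ⟨le_refl i, ?_⟩)
            intro hcon
            exact hbad ⟨(a, k, ρ), he, hcon.1, hcon.2.1⟩)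
      push_cast at hsum'
      linarith
  -- Claim 2 : L - i - eps1 ≤ ∑ g
  have key2 : ((L:ℤ) - i - (Γ.eps1 : ℤ)) ≤
      (Γ.edges.map fun e => LEGAux.contribZ e - LEGAux.wZ i e).sum := by
    by_cases hbad : ∃ b ∈ Γ.edges, b.1 + 1 = i ∧ b.2.2 = 1
    · obtain ⟨b, hbE, hba, hbρ⟩ := hbad
      obtain ⟨hb1, hb2, hb3⟩ := hval _ hbE
      have hkb : i + 1 ≤ b.2.1 := by omega
      have hkbL : b.2.1 ≤ L := by have := hmaxle _ hbE; omega
      have hrest : Γ.edges = b ::ₘ Γ.edges.erase b := (Multiset.cons_erase hbE).symm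
      have hgb : LEGAux.contribZ b - LEGAux.wZ i b = (b.2.1 : ℤ) - b.1 - 2 := by
        unfold LEGAux.contribZ LEGAux.wZ
        rw [hbρ]
        rw [if_pos ⟨by omega, by omega⟩, if_neg (by omega)]
        push_cast
        ring
      have hcov' : ∀ v, b.2.1 ≤ v → v < L →
          ∃ e ∈ Γ.edges.erase b, e.1 < v ∧ v < e.2.1 := by
        intro v hv1 hv2
        obtain ⟨e, he, hc⟩ := hcov v (by omega) (by omega)
        refine ⟨e, (Multiset.mem_erase_of_ne ?_).2 he, hc⟩
        intro hEq
        rw [hEq] at hc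
        omega
      by_cases heps : ∀ e ∈ Γ.edges, (e.1 = Γ.maxv ∨ e.2.1 = Γ.maxv) → e.2.2 = 1
      · have heps1 : Γ.eps1 = 1 := by unfold LongEdgeGraph.eps1; rw [if_pos heps]
        have hsum' : ((L:ℤ) - (b.2.1 : ℕ)) ≤
            ((Γ.edges.erase b).map fun e => LEGAux.contribZ e - LEGAux.wZ i e).sum :=
          LEGAux.cover_sum (Γ.edges.erase b)
            (fun e => LEGAux.contribZ e - LEGAux.wZ i e) b.2.1 L hcov'
            (by intro e he
                obtain ⟨a, k, ρ⟩ := e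
                obtain ⟨h1, h2, h3⟩ := hval _ (Multiset.mem_of_mem_erase he)
                exact LEGAux.gp i b.2.1 L a k ρ h1 h2 h3 (Or.inr (Or.inr (Or.inr (by omega)))))
        rw [hrest, Multiset.map_cons, Multiset.sum_cons, hgb, heps1]
        push_cast at hsum' ⊢
        linarith
      · have heps1 : Γ.eps1 = 0 := by unfold LongEdgeGraph.eps1; rw [if_neg heps]
        push_neg at heps
        obtain ⟨f, hfE, hf0, hfρ⟩ := heps
        obtain ⟨hfv1, hfv2, _⟩ := hval _ hfE
        have hfmax := hmaxle _ hfE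
        have hfk : f.2.1 = L := by rw [hlen] at hf0; omega
        have hfρ2 : 2 ≤ f.2.2 := by omega
        have hfb : f ≠ b := by intro h; rw [h] at hfρ2; omega
        have hfE' : f ∈ Γ.edges.erase b := (Multiset.mem_erase_of_ne hfb).2 hfE
        obtain ⟨fa, fk, fρ⟩ := f
        simp only at hfk hfρ2 hfv1 hfv2
        subst hfk
        have hsum0 : ((L:ℤ) - (b.2.1 : ℕ)) ≤
            ((Γ.edges.erase b).map fun e =>
              (LEGAux.contribZ e - LEGAux.wZ i e) - (if e = (fa, L, fρ) then 1 else 0)).sum :=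
          LEGAux.cover_sum (Γ.edges.erase b)
            (fun e => (LEGAux.contribZ e - LEGAux.wZ i e) - (if e = (fa, L, fρ) then 1 else 0))
            b.2.1 L hcov'
            (by intro e he
                by_cases hef : e = (fa, L, fρ)
                · subst hef
                  rw [if_pos rfl]
                  have h := LEGAux.gpf_right i b.2.1 L fa fρ hfv1 hfρ2 hkb (by omega)
                  exact le_sub_iff_add_le.mpr h
                · rw [if_neg hef, sub_zero]
                  obtain ⟨a, k, ρ⟩ := e
                  obtain ⟨h1, h2, h3⟩ := hval _ (Multiset.mem_of_mem_erase he)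
                  exact LEGAux.gp i b.2.1 L a k ρ h1 h2 h3 (Or.inr (Or.inr (Or.inr (by omega)))))
        have hind : (1:ℤ) ≤ ((Γ.edges.erase b).map fun e =>
            (if e = (fa, L, fρ) then (1:ℤ) else 0)).sum := by
          have hmem : (if (fa, L, fρ) = (fa, L, fρ) then (1:ℤ) else 0) ∈
              (Γ.edges.erase b).map fun e => (if e = (fa, L, fρ) then (1:ℤ) else 0) :=
            Multiset.mem_map_of_mem _ hfE'
          have h := Multiset.single_le_sum
            (s := (Γ.edges.erase b).map fun e => (if e = (fa, L, fρ) then (1:ℤ) else 0))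
            (by intro x hx; rw [Multiset.mem_map] at hx; obtain ⟨a, _, rfl⟩ := hx
                split <;> norm_num) _ hmem
          rwa [if_pos rfl] at h
        have hsplit : ((Γ.edges.erase b).map fun e =>
              (LEGAux.contribZ e - LEGAux.wZ i e) - (if e = (fa, L, fρ) then 1 else 0)).sum
            = ((Γ.edges.erase b).map fun e => LEGAux.contribZ e - LEGAux.wZ i e).sum
              - ((Γ.edges.erase b).map fun e => (if e = (fa, L, fρ) then (1:ℤ) else 0)).sum :=
          Multiset.sum_map_sub
        rw [hrest, Multiset.map_cons, Multiset.sum_cons, hgb, heps1]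
        rw [hsplit] at hsum0
        push_cast at hsum0 ⊢
        linarith
    · have hsum' := LEGAux.cover_sum Γ.edges (fun e => LEGAux.contribZ e - LEGAux.wZ i e) i L
        (fun v hv1 hv2 => hcov v (by omega) (by omega))
        (by intro e he
            obtain ⟨a, k, ρ⟩ := e
            obtain ⟨h1, h2, h3⟩ := hval _ he
            refine LEGAux.gp i i L a k ρ h1 h2 h3 (Or.inr (Or.inr (Or.inl ⟨le_refl i, ?_⟩)))
            intro hcon
            exact hbad ⟨(a, k, ρ), he, hcon.1, hcon.2.1⟩)
      linarith
  refine le_min ?_ (le_min ?_ ?_)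
  · linarith
  · linarith
  · linarith
end

section
/- Let Δ be an h-transverse polygon of height M whose width sequence β(Δ) = (β_0,…,β_M) is nonconstant, and suppose that every extremal edge of Δ has length at least E, for some integer E > 0. Then β_i ≥ min{d^t+i, E, d^b+M−i} for all 0 ≤ i ≤ M. In particular, β_i ≥ E for E ≤ i ≤ M−E; and if moreover M ≥ 2E, then β_i ≥ i for i ≤ E and β_i ≥ M−i for i ≥ M−E. -/
open scoped Classical


/-- An h-transverse polygon (up to lattice translation), encoded by its height `M ≥ 1`, its
top and bottom widths `d^t` and `d^b`, and its left and right direction sequences `l, r`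
(0-indexed: `l i`, resp. `r i`, is the slope of the normal vector on the left, resp. right,
side at half-integer height between levels `i` and `i+1`, read from top to bottom, for
`0 ≤ i < M`).  The right directions are nonincreasing and the left ones nondecreasing, the
widths at interior heights are positive, and the total width change matches `d^b`. -/
structure HTransverse where
  M : ℕ
  M_pos : 0 < M
  dt : ℕ
  db : ℕ
  l : ℕ → ℤ
  r : ℕ → ℤ
  r_antitone : ∀ ⦃i j : ℕ⦄, i ≤ j → j < M → r j ≤ r i
  l_monotone : ∀ ⦃i j : ℕ⦄, i ≤ j → j < M → l i ≤ l j
  width_pos : ∀ i : ℕ, 0 < i → i < M → 0 < (dt : ℤ) + ∑ j ∈ Finset.range i, (r j - l j)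
  width_closes : (dt : ℤ) + ∑ j ∈ Finset.range M, (r j - l j) = (db : ℤ)

/-- The partial-sum sequence `β(d^t, r − l)`:
`β_i = d^t + ∑_{j<i} (r_j − l_j)` for `0 ≤ i ≤ M`. -/
def betaOf (dt : ℤ) (l r : ℕ → ℤ) (i : ℕ) : ℤ :=
  dt + ∑ j ∈ Finset.range i, (r j - l j)

namespace HTransverse

/-- The width sequence `β(Δ)` of the polygon: the widths at integer heights, top to bottom. -/
def beta (P : HTransverse) (i : ℕ) : ℤ := betaOf (P.dt : ℤ) P.l P.r i

/-- There is a vertex of `Δ` on the right side at level `N`, `0 < N < M` (an internal vertex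
of the right boundary): the right direction changes there. -/
def IsRightVertex (P : HTransverse) (N : ℕ) : Prop :=
  0 < N ∧ N < P.M ∧ P.r (N - 1) ≠ P.r N

/-- There is a vertex of `Δ` on the left side at level `N`, `0 < N < M`. -/
def IsLeftVertex (P : HTransverse) (N : ℕ) : Prop :=
  0 < N ∧ N < P.M ∧ P.l (N - 1) ≠ P.l N

/-- There is an internal vertex of `Δ` at level `N` (on either side). -/
def IsInternalVertex (P : HTransverse) (N : ℕ) : Prop :=
  P.IsRightVertex N ∨ P.IsLeftVertex N

/-- Every extremal edge of `Δ` has (lattice) length at least `E`: every internal vertex is at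
level at least `E` from the top and at least `E` from the bottom. -/
def ExtremalGE (P : HTransverse) (E : ℤ) : Prop :=
  ∀ N, P.IsInternalVertex N → E ≤ (N : ℤ) ∧ (N : ℤ) + E ≤ (P.M : ℤ)

/-- Every internal edge of `Δ` has (lattice) length at least `E`: internal vertices on the
same side are at least `E` levels apart. -/
def InternalGE (P : HTransverse) (E : ℤ) : Prop :=
  (∀ N N', P.IsRightVertex N → P.IsRightVertex N' → N < N' → (N : ℤ) + E ≤ (N' : ℤ)) ∧
  (∀ N N', P.IsLeftVertex N → P.IsLeftVertex N' → N < N' → (N : ℤ) + E ≤ (N' : ℤ))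

end HTransverse

/-- `s` is a rearrangement of the first `M` entries of `s0`. -/
def IsRearrangement (M : ℕ) (s0 s : ℕ → ℤ) : Prop :=
  ∃ σ : Equiv.Perm (Fin M), ∀ i : Fin M, s (i : ℕ) = s0 ((σ i : ℕ))

/-- The cogenus `δ(l, r)` of a pair of integer sequences of length `M` (0-indexed):
`δ(l,r) = ∑_{(i,j) ∈ Rev(r)} (r_j − r_i) + ∑_{(i,j) ∈ Rev(−l)} (l_i − l_j)`. -/
def cogenusLR (M : ℕ) (l r : ℕ → ℤ) : ℤ :=
  (∑ p ∈ (Finset.range M ×ˢ Finset.range M).filter (fun p => p.1 < p.2 ∧ r p.1 < r p.2),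
      (r p.2 - r p.1)) +
  (∑ p ∈ (Finset.range M ×ˢ Finset.range M).filter (fun p => p.1 < p.2 ∧ l p.2 < l p.1),
      (l p.1 - l p.2))

namespace HTransverse

/-- Auxiliary: the increment sequence `r − l` of an h-transverse polygon. -/
def sd (P : HTransverse) (j : ℕ) : ℤ := P.r j - P.l j

lemma sd_anti (P : HTransverse) {i j : ℕ} (hij : i ≤ j) (hj : j < P.M) :
    P.sd j ≤ P.sd i :=
  sub_le_sub (P.r_antitone hij hj) (P.l_monotone hij hj)

lemma beta_eq (P : HTransverse) (n : ℕ) :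
    P.beta n = (P.dt : ℤ) + ∑ j ∈ Finset.range n, P.sd j := rfl

lemma closes' (P : HTransverse) :
    (P.dt : ℤ) + ∑ j ∈ Finset.range P.M, P.sd j = (P.db : ℤ) := P.width_closes

lemma step_eq (P : HTransverse) {E : ℤ} (hext : P.ExtremalGE E) {N : ℕ}
    (h1 : 0 < N) (h2 : N < P.M) (h3 : (N : ℤ) < E ∨ (P.M : ℤ) < (N : ℤ) + E) :
    P.sd (N - 1) = P.sd N := by
  have hr : P.r (N - 1) = P.r N := by
    by_contra hc
    have h := hext N (Or.inl ⟨h1, h2, hc⟩)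
    rcases h3 with h' | h' <;> linarith [h.1, h.2]
  have hl : P.l (N - 1) = P.l N := by
    by_contra hc
    have h := hext N (Or.inr ⟨h1, h2, hc⟩)
    rcases h3 with h' | h' <;> linarith [h.1, h.2]
  unfold sd
  rw [hr, hl]

lemma flat_top (P : HTransverse) {E : ℤ} (hext : P.ExtremalGE E) :
    ∀ j, j < P.M → (j : ℤ) < E → P.sd j = P.sd 0 := by
  intro j
  induction j with
  | zero => intro _ _; rfl
  | succ n ih =>
    intro hM hE
    have h := P.step_eq hext (Nat.succ_pos n) hM (Or.inl hE)
    simp only [Nat.succ_sub_one] at h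
    rw [← h]
    exact ih (lt_trans (Nat.lt_succ_self n) hM) (by push_cast at hE ⊢; linarith)

lemma flat_bot (P : HTransverse) {E : ℤ} (hext : P.ExtremalGE E) :
    ∀ d j, j + d + 1 = P.M → (P.M : ℤ) ≤ (j : ℤ) + E →
      P.sd j = P.sd (P.M - 1) := by
  intro d
  induction d with
  | zero =>
    intro j hj _
    have : j = P.M - 1 := by omega
    rw [this]
  | succ n ih =>
    intro j hj hEj
    have h2 : j + 1 < P.M := by omega
    have h := P.step_eq hext (Nat.succ_pos j) h2 (Or.inr (by push_cast at hEj ⊢; linarith))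
    simp only [Nat.succ_sub_one] at h
    rw [h]
    exact ih (j + 1) (by omega) (by push_cast at hEj ⊢; linarith)

lemma beta_min_bound (P : HTransverse) (E : ℕ) (hE : 0 < E)
    (hnc : ∃ i j, i ≤ P.M ∧ j ≤ P.M ∧ P.beta i ≠ P.beta j)
    (hext : P.ExtremalGE (E : ℤ)) :
    ∀ i, i ≤ P.M →
      min ((P.dt : ℤ) + (i : ℤ)) (min (E : ℤ) ((P.db : ℤ) + (P.M : ℤ) - (i : ℤ))) ≤ P.beta i := by
  intro i hiM
  have hbot : P.beta i = (P.db : ℤ) - ∑ j ∈ Finset.Ico i P.M, P.sd j := by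
    have h1 := Finset.sum_range_add_sum_Ico P.sd hiM
    have h2 := P.closes'
    rw [P.beta_eq]
    linarith
  by_cases hpos : ∀ j, j < i → 1 ≤ P.sd j
  · -- all increments ≥ 1 up to i : beta i ≥ dt + i
    refine le_trans (min_le_left _ _) ?_
    rw [P.beta_eq]
    have hsum : (i : ℤ) ≤ ∑ j ∈ Finset.range i, P.sd j := by
      have h1 : (i : ℤ) = ∑ _j ∈ Finset.range i, (1 : ℤ) := by simp
      rw [h1]
      exact Finset.sum_le_sum fun j hj => hpos j (Finset.mem_range.mp hj)
    linarith
  · push_neg at hpos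
    obtain ⟨j0, hj0i, hj0⟩ := hpos
    have hj0le : P.sd j0 ≤ 0 := by omega
    by_cases hneg : ∀ j, i ≤ j → j < P.M → P.sd j ≤ -1
    · -- all increments ≤ -1 from i on : beta i ≥ db + (M - i)
      refine le_trans (le_trans (min_le_right _ _) (min_le_right _ _)) ?_
      rw [hbot]
      have hsum : ∑ j ∈ Finset.Ico i P.M, P.sd j ≤ ∑ _j ∈ Finset.Ico i P.M, (-1 : ℤ) :=
        Finset.sum_le_sum fun j hj => by
          have h := Finset.mem_Ico.mp hj; exact hneg j h.1 h.2
      rw [Finset.sum_const, Nat.card_Ico, nsmul_eq_mul] at hsum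
      have hc : ((P.M - i : ℕ) : ℤ) = (P.M : ℤ) - i := by omega
      rw [hc] at hsum
      linarith
    · push_neg at hneg
      obtain ⟨k, hik, hkM, hk⟩ := hneg
      have hk0 : 0 ≤ P.sd k := by omega
      -- nonconstancy gives some nonzero increment
      have hm : ∃ m, m < P.M ∧ P.sd m ≠ 0 := by
        by_contra h
        push_neg at h
        obtain ⟨a, b, ha, hb, hab⟩ := hnc
        apply hab
        have hconst : ∀ n, n ≤ P.M → P.beta n = (P.dt : ℤ) := by
          intro n hn
          rw [P.beta_eq, Finset.sum_eq_zero, add_zero]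
          intro j hj
          exact h j (lt_of_lt_of_le (Finset.mem_range.mp hj) hn)
        rw [hconst a ha, hconst b hb]
      obtain ⟨m, hmM, hm0⟩ := hm
      rcases lt_or_ge 0 (P.sd m) with hsm | hsm
      · -- positive increment exists: sd 0 ≥ 1, top flat for E steps, sd j ≥ 0 for j < i
        have hs0 : 1 ≤ P.sd 0 := le_trans (by omega) (P.sd_anti (Nat.zero_le m) hmM)
        have hge0 : ∀ j, j < i → 0 ≤ P.sd j := by
          intro j hj
          exact le_trans hk0 (P.sd_anti (by omega) hkM)
        have hge1 : ∀ j, j < i → (j : ℤ) < (E : ℤ) → 1 ≤ P.sd j := by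
          intro j hj hjE
          have hjM : j < P.M := lt_of_lt_of_le hj hiM
          rw [P.flat_top hext j hjM hjE]
          exact hs0
        rcases le_or_gt (E : ℕ) i with hEi | hEi
        · -- beta i ≥ dt + E ≥ E
          refine le_trans (le_trans (min_le_right _ _) (min_le_left _ _)) ?_
          rw [P.beta_eq]
          have h1 := Finset.sum_range_add_sum_Ico P.sd hEi
          have hA : (E : ℤ) ≤ ∑ j ∈ Finset.range E, P.sd j := by
            have h2 : (E : ℤ) = ∑ _j ∈ Finset.range E, (1 : ℤ) := by simp
            rw [h2]
            refine Finset.sum_le_sum fun j hj => ?_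
            have hjE := Finset.mem_range.mp hj
            exact hge1 j (lt_of_lt_of_le hjE hEi) (by omega)
          have hB : 0 ≤ ∑ j ∈ Finset.Ico E i, P.sd j :=
            Finset.sum_nonneg fun j hj => hge0 j (Finset.mem_Ico.mp hj).2
          have hdt : (0 : ℤ) ≤ (P.dt : ℤ) := Nat.cast_nonneg _
          linarith
        · -- i < E : beta i ≥ dt + i
          refine le_trans (min_le_left _ _) ?_
          rw [P.beta_eq]
          have hsum : (i : ℤ) ≤ ∑ j ∈ Finset.range i, P.sd j := by
            have h1 : (i : ℤ) = ∑ _j ∈ Finset.range i, (1 : ℤ) := by simp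
            rw [h1]
            refine Finset.sum_le_sum fun j hj => ?_
            have hji := Finset.mem_range.mp hj
            exact hge1 j hji (by omega)
          linarith
      · -- negative increment exists: sd (M-1) ≤ -1, bottom flat, sd j ≤ 0 for j ≥ i
        have hsm1 : P.sd m ≤ -1 := by omega
        have hM1 : P.M - 1 < P.M := by have := P.M_pos; omega
        have hsM1 : P.sd (P.M - 1) ≤ -1 :=
          le_trans (P.sd_anti (by omega : m ≤ P.M - 1) hM1) hsm1
        have hle0 : ∀ j, i ≤ j → j < P.M → P.sd j ≤ 0 := by
          intro j hij' hjM
          exact le_trans (P.sd_anti (by omega : j0 ≤ j) hjM) hj0le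
        have hleneg : ∀ j, j < P.M → (P.M : ℤ) ≤ (j : ℤ) + E → P.sd j ≤ -1 := by
          intro j hjM hjE
          rw [P.flat_bot hext (P.M - 1 - j) j (by omega) hjE]
          exact hsM1
        rcases le_or_gt (i + E) P.M with hiE | hiE
        · -- beta i ≥ db + E ≥ E
          refine le_trans (le_trans (min_le_right _ _) (min_le_left _ _)) ?_
          rw [hbot]
          have hEM : E ≤ P.M := by omega
          have h1 := Finset.sum_Ico_consecutive P.sd
            (by omega : i ≤ P.M - E) (by omega : P.M - E ≤ P.M)
          have hA : ∑ j ∈ Finset.Ico i (P.M - E), P.sd j ≤ 0 :=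
            Finset.sum_nonpos fun j hj => by
              have h := Finset.mem_Ico.mp hj
              exact hle0 j h.1 (by omega)
          have hB : ∑ j ∈ Finset.Ico (P.M - E) P.M, P.sd j ≤ -(E : ℤ) := by
            have hsum : ∑ j ∈ Finset.Ico (P.M - E) P.M, P.sd j
                ≤ ∑ _j ∈ Finset.Ico (P.M - E) P.M, (-1 : ℤ) :=
              Finset.sum_le_sum fun j hj => by
                have h := Finset.mem_Ico.mp hj
                exact hleneg j h.2 (by omega)
            rw [Finset.sum_const, Nat.card_Ico, nsmul_eq_mul] at hsum
            have hc : ((P.M - (P.M - E) : ℕ) : ℤ) = (E : ℤ) := by omega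
            rw [hc] at hsum
            linarith
          have hdb : (0 : ℤ) ≤ (P.db : ℤ) := Nat.cast_nonneg _
          linarith
        · -- M < i + E : beta i ≥ db + (M - i)
          refine le_trans (le_trans (min_le_right _ _) (min_le_right _ _)) ?_
          rw [hbot]
          have hsum : ∑ j ∈ Finset.Ico i P.M, P.sd j ≤ ∑ _j ∈ Finset.Ico i P.M, (-1 : ℤ) :=
            Finset.sum_le_sum fun j hj => by
              have h := Finset.mem_Ico.mp hj
              exact hleneg j h.2 (by omega)
          rw [Finset.sum_const, Nat.card_Ico, nsmul_eq_mul] at hsum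
          have hc : ((P.M - i : ℕ) : ℤ) = (P.M : ℤ) - i := by omega
          rw [hc] at hsum
          linarith

end HTransverse

/-- let `Δ` be an h-transverse polygon of height `M` with nonconstant width
sequence `β(Δ)`, all of whose extremal edges have length at least `E > 0`.  Then
`β_i ≥ min {d^t + i, E, d^b + M − i}` for `0 ≤ i ≤ M`.  In particular `β_i ≥ E` for
`E ≤ i ≤ M − E`; and if moreover `M ≥ 2E`, then `β_i ≥ i` for `i ≤ E` and `β_i ≥ M − i`
for `i ≥ M − E`. -/
theorem beta_lower_bounds (P : HTransverse) (E : ℕ) (hE : 0 < E)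
    (hnc : ∃ i j, i ≤ P.M ∧ j ≤ P.M ∧ P.beta i ≠ P.beta j)
    (hext : P.ExtremalGE (E : ℤ)) :
    (∀ i, i ≤ P.M →
      min ((P.dt : ℤ) + (i : ℤ)) (min (E : ℤ) ((P.db : ℤ) + (P.M : ℤ) - (i : ℤ))) ≤ P.beta i) ∧
    (∀ i, E ≤ i → i ≤ P.M - E → (E : ℤ) ≤ P.beta i) ∧
    (2 * E ≤ P.M →
      (∀ i, i ≤ E → (i : ℤ) ≤ P.beta i) ∧
      (∀ i, P.M - E ≤ i → i ≤ P.M → (P.M : ℤ) - (i : ℤ) ≤ P.beta i)) := by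
  have main := P.beta_min_bound E hE hnc hext
  refine ⟨main, ?_, ?_⟩
  · intro i hEi hiME
    have hEM : E ≤ P.M := by omega
    have hiM : i ≤ P.M := by omega
    refine le_trans (le_min (by omega) (le_min (le_refl _) (by omega))) (main i hiM)
  · intro h2E
    constructor
    · intro i hiE
      have hiM : i ≤ P.M := by omega
      refine le_trans (le_min (by omega) (le_min (by omega) (by omega))) (main i hiM)
    · intro i hMEi hiM
      refine le_trans (le_min (by omega) (le_min (by omega) (by omega))) (main i hiM)
end

section
/- Let l_0 and r_0 be integer sequences of length M, let (l,r) be a pair of rearrangements of l_0 and r_0, and suppose (l′,r′) is obtained from (l,r) by swapping a single adjacent reversed pair — either two consecutive entries r_i < r_{i+1} of r, or two consecutive entries l_i > l_{i+1} of l — whose two values differ by d. Then δ(l′,r′) = δ(l,r) − d. -/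
open scoped Classical


/-- Auxiliary sum: reversal-weighted sum for a single sequence. -/
def Fsum (M : ℕ) (s : ℕ → ℤ) : ℤ :=
  ∑ p ∈ (Finset.range M ×ˢ Finset.range M).filter (fun p => p.1 < p.2 ∧ s p.1 < s p.2),
    (s p.2 - s p.1)

lemma Fsum_swap (M i : ℕ) (hi : i + 1 < M) (s : ℕ → ℤ) (hs : s i < s (i + 1)) :
    Fsum M (Function.update (Function.update s i (s (i + 1))) (i + 1) (s i))
      = Fsum M s - (s (i + 1) - s i) := by
  classical
  set s' : ℕ → ℤ := Function.update (Function.update s i (s (i + 1))) (i + 1) (s i) with hs'def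
  set t : ℕ → ℕ := fun k => if k = i then i + 1 else if k = i + 1 then i else k with ht
  have htt : ∀ k, t (t k) = k := by
    intro k; simp only [ht]; split_ifs <;> omega
  have e1 : t i = i + 1 := by simp only [ht]; split_ifs <;> omega
  have e2 : t (i + 1) = i := by simp only [ht]; split_ifs <;> omega
  have hst : ∀ k, s' k = s (t k) := by
    intro k
    rcases eq_or_ne k (i + 1) with h | h
    · rw [h, e2]; simp [hs'def]
    · rcases eq_or_ne k i with h2 | h2
      · rw [h2, e1]; simp [hs'def, Function.update_of_ne h]
      · have e3 : t k = k := by simp only [ht]; split_ifs <;> omega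
        simp [hs'def, e3, Function.update_of_ne h, Function.update_of_ne h2]
  have htord : ∀ a b : ℕ, a < b → ¬(a = i ∧ b = i + 1) → t a < t b := by
    intro a b h hne; simp only [ht]; split_ifs <;> omega
  have htrange : ∀ k, k < M → t k < M := by
    intro k hk; simp only [ht]; split_ifs <;> omega
  set A := (Finset.range M ×ˢ Finset.range M).filter
    (fun p => p.1 < p.2 ∧ s p.1 < s p.2) with hA
  set A' := (Finset.range M ×ˢ Finset.range M).filter
    (fun p => p.1 < p.2 ∧ s' p.1 < s' p.2) with hA'
  have hmemA : (i, i + 1) ∈ A := by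
    simp [hA, Finset.mem_filter, Finset.mem_product, hi, Nat.lt_of_succ_lt hi, hs]
  have key : Fsum M s' = ∑ q ∈ A.erase (i, i + 1), (s q.2 - s q.1) := by
    rw [Fsum]
    refine Finset.sum_nbij' (fun p => (t p.1, t p.2)) (fun q => (t q.1, t q.2)) ?_ ?_ ?_ ?_ ?_
    · intro p hp
      simp only [hA', Finset.mem_filter, Finset.mem_product, Finset.mem_range] at hp
      obtain ⟨⟨hp1, hp2⟩, hlt, hslt⟩ := hp
      have hne : ¬(p.1 = i ∧ p.2 = i + 1) := by
        rintro ⟨h1, h2⟩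
        rw [hst, hst] at hslt
        have e1 : t p.1 = i + 1 := by simp only [ht, h1]; split_ifs <;> omega
        have e2 : t p.2 = i := by simp only [ht, h2]; split_ifs <;> omega
        rw [e1, e2] at hslt; omega
      have horder := htord p.1 p.2 hlt hne
      have hne2 : ¬(t p.1 = i ∧ t p.2 = i + 1) := by
        rintro ⟨h1, h2⟩
        have a1 := htt p.1; rw [h1, e1] at a1
        have a2 := htt p.2; rw [h2, e2] at a2
        omega
      simp only [Finset.mem_erase, hA, Finset.mem_filter, Finset.mem_product,
        Finset.mem_range]
      refine ⟨?_, ⟨htrange _ hp1, htrange _ hp2⟩, horder, ?_⟩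
      · intro hcon
        apply hne2
        constructor
        · exact congrArg Prod.fst hcon
        · exact congrArg Prod.snd hcon
      · rw [hst, hst] at hslt; exact hslt
    · intro q hq
      simp only [Finset.mem_erase, hA, Finset.mem_filter, Finset.mem_product,
        Finset.mem_range] at hq
      obtain ⟨hqne, ⟨hq1, hq2⟩, hlt, hslt⟩ := hq
      have hne : ¬(q.1 = i ∧ q.2 = i + 1) := by
        rintro ⟨h1, h2⟩
        apply hqne
        exact Prod.ext h1 h2
      have horder := htord q.1 q.2 hlt hne
      simp only [hA', Finset.mem_filter, Finset.mem_product, Finset.mem_range]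
      refine ⟨⟨htrange _ hq1, htrange _ hq2⟩, horder, ?_⟩
      rw [hst, hst, htt, htt]; exact hslt
    · intro p _; simp [htt]
    · intro q _; simp [htt]
    · intro p _; rw [hst, hst]
  rw [key]
  have := Finset.sum_erase_add A (fun q => (s q.2 - s q.1)) hmemA
  simp only at this
  rw [Fsum, ← hA]
  omega

lemma cogenus_eq (M : ℕ) (l r : ℕ → ℤ) :
    cogenusLR M l r = Fsum M r + Fsum M (fun k => -l k) := by
  rw [cogenusLR, Fsum, Fsum]
  congr 1
  apply Finset.sum_congr
  · apply Finset.filter_congr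
    intro p _
    constructor <;> rintro ⟨h1, h2⟩ <;> exact ⟨h1, by omega⟩
  · intro p _; ring

/-- if `(l', r')` is obtained from a pair of rearrangements `(l, r)` of
`(l_0, r_0)` by swapping a single adjacent reversed pair (either consecutive entries
`r_i < r_{i+1}` of `r`, or consecutive entries `l_i > l_{i+1}` of `l`) whose values differ
by `d`, then `δ(l', r') = δ(l, r) − d`. -/
theorem cogenus_adjacent_swap (M : ℕ) (l0 r0 l r l' r' : ℕ → ℤ) (d : ℤ)
    (hl : IsRearrangement M l0 l) (hr : IsRearrangement M r0 r)
    (hswap :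
      (∃ i, i + 1 < M ∧ r i < r (i + 1) ∧ d = r (i + 1) - r i ∧ l' = l ∧
        r' = Function.update (Function.update r i (r (i + 1))) (i + 1) (r i)) ∨
      (∃ i, i + 1 < M ∧ l (i + 1) < l i ∧ d = l i - l (i + 1) ∧ r' = r ∧
        l' = Function.update (Function.update l i (l (i + 1))) (i + 1) (l i))) :
    cogenusLR M l' r' = cogenusLR M l r - d := by
  rcases hswap with ⟨i, hi, hlt, hd, hl', hr'⟩ | ⟨i, hi, hlt, hd, hr', hl'⟩
  · subst hl'; subst hr'
    rw [cogenus_eq, cogenus_eq, Fsum_swap M i hi r hlt, hd]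
    ring
  · subst hl'; subst hr'
    rw [cogenus_eq, cogenus_eq]
    have hneg : (fun k => -(Function.update (Function.update l i (l (i + 1))) (i + 1)
        (l i)) k) = Function.update (Function.update (fun k => -l k) i
        (-l (i + 1))) (i + 1) (-l i) := by
      funext k
      rcases eq_or_ne k (i + 1) with h | h
      · subst h; simp
      · rcases eq_or_ne k i with h2 | h2
        · subst h2; simp [Function.update_of_ne h]
        · simp [Function.update_of_ne h, Function.update_of_ne h2]
    rw [hneg]
    have hs : (fun k => -l k) i < (fun k => -l k) (i + 1) := by simpa using hlt
    have := Fsum_swap M i hi (fun k => -l k) hs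
    rw [this, hd]
    ring
end

section
/- Let d^t be an integer, let r_0 be a nonincreasing integer sequence and l_0 a nondecreasing integer sequence, both of length M, and let r and l be rearrangements of r_0 and l_0 respectively. Write β(Δ) = β(d^t, r_0−l_0) = (β_0(Δ),…,β_M(Δ)) and β = β(d^t, r−l) = (β_0,…,β_M). Then β_j(Δ) ≥ β_j for every 0 ≤ j ≤ M, and δ(l,r) = ∑_{j=0}^{M} (β_j(Δ) − β_j). -/
open scoped Classical


section Aux

open Finset

lemma aux_pair_sum (M : ℕ) (f : ℕ → ℕ → ℤ) :
    ∑ p ∈ (range M ×ˢ range M).filter (fun p => p.1 < p.2), f p.1 p.2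
      = ∑ j ∈ range M, ∑ i ∈ range j, f i j := by
  rw [sum_filter, Finset.sum_product, Finset.sum_comm]
  refine sum_congr rfl fun j hj => ?_
  rw [mem_range] at hj
  rw [← sum_filter]
  congr 1
  ext a
  simp only [mem_filter, mem_range]
  omega

lemma aux_double_sum (M : ℕ) (g : ℕ → ℤ) :
    ∑ j ∈ range M, ∑ i ∈ range j, g i
      = ∑ i ∈ range M, ((M : ℤ) - 1 - i) * g i := by
  induction M with
  | zero => simp
  | succ n ih =>
    rw [Finset.sum_range_succ, ih, Finset.sum_range_succ]
    push_cast
    rw [← Finset.sum_add_distrib]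
    rw [show ((n : ℤ) + 1 - 1 - n) * g n = 0 by ring, add_zero]
    refine sum_congr rfl fun i _ => by ring

lemma aux_sum_inv (M : ℕ) (s0 s : ℕ → ℤ) (h : IsRearrangement M s0 s) :
    ∑ i ∈ range M, s i = ∑ i ∈ range M, s0 i := by
  obtain ⟨σ, hσ⟩ := h
  rw [Finset.sum_range, Finset.sum_range]
  calc ∑ i : Fin M, s (i : ℕ) = ∑ i : Fin M, s0 ((σ i : ℕ)) := by
        exact Fintype.sum_congr _ _ hσ
    _ = ∑ i : Fin M, s0 (i : ℕ) := Equiv.sum_comp σ fun i : Fin M => s0 (i : ℕ)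

lemma aux_full_abs_inv (M : ℕ) (s0 s : ℕ → ℤ) (h : IsRearrangement M s0 s) :
    ∑ i ∈ range M, ∑ j ∈ range M, |s i - s j|
      = ∑ i ∈ range M, ∑ j ∈ range M, |s0 i - s0 j| := by
  obtain ⟨σ, hσ⟩ := h
  simp only [Finset.sum_range]
  calc ∑ i : Fin M, ∑ j : Fin M, |s (i : ℕ) - s (j : ℕ)|
      = ∑ i : Fin M, ∑ j : Fin M, |s0 ((σ i : ℕ)) - s0 ((σ j : ℕ))| := by
        refine Fintype.sum_congr _ _ fun i => Fintype.sum_congr _ _ fun j => by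
          rw [hσ i, hσ j]
    _ = ∑ i : Fin M, ∑ j : Fin M, |s0 ((σ i : ℕ)) - s0 ((j : ℕ))| := by
        refine Fintype.sum_congr _ _ fun i => ?_
        exact Equiv.sum_comp σ fun j : Fin M => |s0 ((σ i : ℕ)) - s0 ((j : ℕ))|
    _ = ∑ i : Fin M, ∑ j : Fin M, |s0 (i : ℕ) - s0 ((j : ℕ))| :=
        Equiv.sum_comp σ fun i : Fin M => ∑ j : Fin M, |s0 ((i : ℕ)) - s0 ((j : ℕ))|

lemma aux_two_filt_abs (M : ℕ) (s : ℕ → ℤ) :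
    2 * ∑ p ∈ (range M ×ˢ range M).filter (fun p => p.1 < p.2), |s p.1 - s p.2|
      = ∑ i ∈ range M, ∑ j ∈ range M, |s i - s j| := by
  have hsq : ∑ i ∈ range M, ∑ j ∈ range M, |s i - s j|
      = ∑ p ∈ range M ×ˢ range M, |s p.1 - s p.2| := by
    rw [Finset.sum_product]
  rw [hsq, ← Finset.sum_filter_add_sum_filter_not (range M ×ˢ range M)
      (fun p => p.1 < p.2) (fun p => |s p.1 - s p.2|)]
  have hswap : ∑ p ∈ (range M ×ˢ range M).filter (fun p => ¬ p.1 < p.2), |s p.1 - s p.2|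
      = ∑ p ∈ (range M ×ˢ range M).filter (fun p => p.1 < p.2), |s p.1 - s p.2|
        + ∑ p ∈ (range M ×ˢ range M).filter (fun p => ¬ p.1 < p.2 ∧ ¬ p.2 < p.1),
            |s p.1 - s p.2| := by
    rw [← Finset.sum_filter_add_sum_filter_not
        ((range M ×ˢ range M).filter (fun p => ¬ p.1 < p.2)) (fun p => p.2 < p.1),
        Finset.filter_filter, Finset.filter_filter]
    congr 1
    refine Finset.sum_nbij' (fun p => (p.2, p.1)) (fun p => (p.2, p.1)) ?_ ?_ ?_ ?_ ?_
    · intro p hp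
      simp only [mem_filter, mem_product, mem_range] at hp ⊢
      omega
    · intro p hp
      simp only [mem_filter, mem_product, mem_range] at hp ⊢
      omega
    · intro p _; rfl
    · intro p _; rfl
    · intro p _
      exact (abs_sub_comm _ _)
  rw [hswap]
  have hdiag : ∑ p ∈ (range M ×ˢ range M).filter (fun p => ¬ p.1 < p.2 ∧ ¬ p.2 < p.1),
      |s p.1 - s p.2| = 0 := by
    refine Finset.sum_eq_zero fun p hp => ?_
    simp only [mem_filter] at hp
    have : p.1 = p.2 := by omega
    rw [this, sub_self, abs_zero]
  rw [hdiag]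
  ring

/-- Key identity: the reversal sum equals `∑ i, i * (s i - s0 i)`. -/
lemma aux_rev_sum (M : ℕ) (s0 s : ℕ → ℤ)
    (hs0 : ∀ ⦃i j : ℕ⦄, i ≤ j → j < M → s0 j ≤ s0 i)
    (h : IsRearrangement M s0 s) :
    ∑ p ∈ (range M ×ˢ range M).filter (fun p => p.1 < p.2 ∧ s p.1 < s p.2),
        (s p.2 - s p.1)
      = ∑ i ∈ range M, (i : ℤ) * (s i - s0 i) := by
  have hfilt : ((range M ×ˢ range M).filter (fun p => p.1 < p.2 ∧ s p.1 < s p.2))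
      = ((range M ×ˢ range M).filter (fun p => p.1 < p.2)).filter
          (fun p => s p.1 < s p.2) := by
    rw [Finset.filter_filter]
  have key : 2 * ∑ p ∈ (range M ×ˢ range M).filter (fun p => p.1 < p.2 ∧ s p.1 < s p.2),
        (s p.2 - s p.1)
      = ∑ p ∈ (range M ×ˢ range M).filter (fun p => p.1 < p.2),
          (|s p.1 - s p.2| + (s p.2 - s p.1)) := by
    rw [hfilt, Finset.sum_filter, Finset.mul_sum]
    refine sum_congr rfl fun p _ => ?_
    split_ifs with hc
    · rcases abs_cases (s p.1 - s p.2) with ⟨h1, h2⟩ | ⟨h1, h2⟩ <;> linarith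
    · rcases abs_cases (s p.1 - s p.2) with ⟨h1, h2⟩ | ⟨h1, h2⟩ <;> linarith
  have key0 : (0 : ℤ)
      = ∑ p ∈ (range M ×ˢ range M).filter (fun p => p.1 < p.2),
          (|s0 p.1 - s0 p.2| + (s0 p.2 - s0 p.1)) := by
    refine (Finset.sum_eq_zero fun p hp => ?_).symm
    simp only [mem_filter, mem_product, mem_range] at hp
    have h1 : s0 p.2 ≤ s0 p.1 := hs0 (le_of_lt hp.2) hp.1.2
    rw [abs_of_nonneg (by linarith)]
    ring
  have habs : ∑ p ∈ (range M ×ˢ range M).filter (fun p => p.1 < p.2), |s p.1 - s p.2|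
      = ∑ p ∈ (range M ×ˢ range M).filter (fun p => p.1 < p.2), |s0 p.1 - s0 p.2| := by
    have h2 := aux_two_filt_abs M s
    have h3 := aux_two_filt_abs M s0
    have h4 := aux_full_abs_inv M s0 s h
    omega
  have hsum0 : ∑ i ∈ range M, (s i - s0 i) = 0 := by
    rw [Finset.sum_sub_distrib, aux_sum_inv M s0 s h, sub_self]
  have key2 : 2 * ∑ p ∈ (range M ×ˢ range M).filter (fun p => p.1 < p.2 ∧ s p.1 < s p.2),
        (s p.2 - s p.1)
      = ∑ p ∈ (range M ×ˢ range M).filter (fun p => p.1 < p.2),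
          ((s p.2 - s0 p.2) - (s p.1 - s0 p.1)) := by
    rw [key]
    rw [Finset.sum_add_distrib, habs]
    have := Finset.sum_add_distrib (s := (range M ×ˢ range M).filter (fun p => p.1 < p.2))
      (f := fun p => |s0 p.1 - s0 p.2|) (g := fun p => (s0 p.2 - s0 p.1))
    have h5 : ∑ p ∈ (range M ×ˢ range M).filter (fun p => p.1 < p.2), (s0 p.2 - s0 p.1)
        = - ∑ p ∈ (range M ×ˢ range M).filter (fun p => p.1 < p.2), |s0 p.1 - s0 p.2| := by
      have := key0.symm
      rw [Finset.sum_add_distrib] at this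
      linarith
    have h6 : ∑ p ∈ (range M ×ˢ range M).filter (fun p => p.1 < p.2),
        ((s p.2 - s0 p.2) - (s p.1 - s0 p.1))
        = ∑ p ∈ (range M ×ˢ range M).filter (fun p => p.1 < p.2), (s p.2 - s p.1)
          - ∑ p ∈ (range M ×ˢ range M).filter (fun p => p.1 < p.2), (s0 p.2 - s0 p.1) := by
      rw [← Finset.sum_sub_distrib]
      refine sum_congr rfl fun p _ => by ring
    rw [h6, h5]
    ring
  have key3 : ∑ p ∈ (range M ×ˢ range M).filter (fun p => p.1 < p.2),
        ((s p.2 - s0 p.2) - (s p.1 - s0 p.1))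
      = 2 * ∑ i ∈ range M, (i : ℤ) * (s i - s0 i) := by
    rw [aux_pair_sum M (fun i j => (s j - s0 j) - (s i - s0 i))]
    have hinner : ∀ j, ∑ i ∈ range j, ((s j - s0 j) - (s i - s0 i))
        = (j : ℤ) * (s j - s0 j) - ∑ i ∈ range j, (s i - s0 i) := by
      intro j
      rw [Finset.sum_sub_distrib, Finset.sum_const, Finset.card_range, nsmul_eq_mul]
    rw [Finset.sum_congr rfl fun j _ => hinner j, Finset.sum_sub_distrib,
        aux_double_sum M (fun i => s i - s0 i)]
    have h7 : ∑ i ∈ range M, ((M : ℤ) - 1 - i) * (s i - s0 i)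
        = ((M : ℤ) - 1) * ∑ i ∈ range M, (s i - s0 i)
          - ∑ i ∈ range M, (i : ℤ) * (s i - s0 i) := by
      rw [Finset.mul_sum, ← Finset.sum_sub_distrib]
      refine sum_congr rfl fun i _ => by ring
    rw [h7, hsum0]
    ring
  have := key2.trans key3
  linarith

lemma aux_subset_sum_le (M : ℕ) (s0 : ℕ → ℤ)
    (hs0 : ∀ ⦃i j : ℕ⦄, i ≤ j → j < M → s0 j ≤ s0 i) :
    ∀ k : ℕ, ∀ S : Finset ℕ, S ⊆ range M → S.card = k →
      ∑ i ∈ S, s0 i ≤ ∑ i ∈ range k, s0 i := by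
  intro k
  induction k with
  | zero =>
    intro S _ hc
    rw [Finset.card_eq_zero] at hc
    simp [hc]
  | succ n ih =>
    intro S hS hc
    have hne : S.Nonempty := Finset.card_pos.mp (by omega)
    have hmem : S.max' hne ∈ S := S.max'_mem hne
    have hmM : S.max' hne < M := mem_range.mp (hS hmem)
    have hnm : n ≤ S.max' hne := by
      by_contra hcon
      push_neg at hcon
      have hsub : S ⊆ range (S.max' hne + 1) := fun a ha =>
        mem_range.mpr (Nat.lt_succ_of_le (S.le_max' a ha))
      have := Finset.card_le_card hsub
      rw [Finset.card_range] at this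
      omega
    have h1 : ∑ i ∈ S.erase (S.max' hne), s0 i ≤ ∑ i ∈ range n, s0 i :=
      ih (S.erase (S.max' hne)) (fun a ha => hS (Finset.erase_subset _ _ ha))
        (by rw [Finset.card_erase_of_mem hmem, hc]; omega)
    have h2 : s0 (S.max' hne) ≤ s0 n := hs0 hnm hmM
    calc ∑ i ∈ S, s0 i = ∑ i ∈ S.erase (S.max' hne), s0 i + s0 (S.max' hne) :=
          (Finset.sum_erase_add _ _ hmem).symm
      _ ≤ ∑ i ∈ range n, s0 i + s0 n := add_le_add h1 h2
      _ = _ := (Finset.sum_range_succ _ _).symm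

lemma aux_prefix_le (M : ℕ) (s0 s : ℕ → ℤ)
    (hs0 : ∀ ⦃i j : ℕ⦄, i ≤ j → j < M → s0 j ≤ s0 i)
    (h : IsRearrangement M s0 s) :
    ∀ k, k ≤ M → ∑ i ∈ range k, s i ≤ ∑ i ∈ range k, s0 i := by
  obtain ⟨σ, hσ⟩ := h
  intro k hk
  set σ' : ℕ → ℕ := fun n => if hn : n < M then ((σ ⟨n, hn⟩ : Fin M) : ℕ) else n with hσ'
  have hmap : ∀ i ∈ range k, s i = s0 (σ' i) := by
    intro i hi
    have hiM : i < M := lt_of_lt_of_le (mem_range.mp hi) hk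
    simp only [hσ', dif_pos hiM]
    exact hσ ⟨i, hiM⟩
  have hinj : ∀ i ∈ range k, ∀ j ∈ range k, σ' i = σ' j → i = j := by
    intro i hi j hj hij
    have hiM : i < M := lt_of_lt_of_le (mem_range.mp hi) hk
    have hjM : j < M := lt_of_lt_of_le (mem_range.mp hj) hk
    simp only [hσ', dif_pos hiM, dif_pos hjM] at hij
    exact congrArg Fin.val (σ.injective (Fin.val_injective hij))
  have himg : ∑ i ∈ range k, s0 (σ' i) = ∑ j ∈ (range k).image σ', s0 j :=
    (Finset.sum_image hinj).symm
  have hsubset : (range k).image σ' ⊆ range M := by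
    intro a ha
    obtain ⟨i, hi, rfl⟩ := Finset.mem_image.mp ha
    have hiM : i < M := lt_of_lt_of_le (mem_range.mp hi) hk
    simp only [hσ', dif_pos hiM]
    exact mem_range.mpr (σ ⟨i, hiM⟩).isLt
  have hcard : ((range k).image σ').card = k := by
    rw [Finset.card_image_of_injOn (fun i hi j hj => hinj i hi j hj), Finset.card_range]
  calc ∑ i ∈ range k, s i = ∑ i ∈ range k, s0 (σ' i) := Finset.sum_congr rfl hmap
    _ = ∑ j ∈ (range k).image σ', s0 j := himg
    _ ≤ ∑ i ∈ range k, s0 i := aux_subset_sum_le M s0 hs0 k _ hsubset hcard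

end Aux

/-- let `d^t` be an integer, `r_0` nonincreasing and `l_0` nondecreasing integer
sequences of length `M`, and `r`, `l` rearrangements of `r_0`, `l_0`.  Writing
`β(Δ) = β(d^t, r_0 − l_0)` and `β = β(d^t, r − l)`, one has `β_j(Δ) ≥ β_j` for all
`0 ≤ j ≤ M`, and `δ(l, r) = ∑_{j=0}^{M} (β_j(Δ) − β_j)`. -/
theorem cogenus_eq_sum_beta_diff (M : ℕ) (dt : ℤ) (l0 r0 l r : ℕ → ℤ)
    (hr0 : ∀ ⦃i j : ℕ⦄, i ≤ j → j < M → r0 j ≤ r0 i)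
    (hl0 : ∀ ⦃i j : ℕ⦄, i ≤ j → j < M → l0 i ≤ l0 j)
    (hl : IsRearrangement M l0 l) (hr : IsRearrangement M r0 r) :
    (∀ j, j ≤ M → betaOf dt l r j ≤ betaOf dt l0 r0 j) ∧
    cogenusLR M l r = ∑ j ∈ Finset.range (M + 1), (betaOf dt l0 r0 j - betaOf dt l r j) := by
  classical
  open Finset in
  have hnl0 : ∀ ⦃i j : ℕ⦄, i ≤ j → j < M → (fun i => -l0 i) j ≤ (fun i => -l0 i) i := by
    intro i j hij hj
    simpa using neg_le_neg (hl0 hij hj)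
  have hnl_re : IsRearrangement M (fun i => -l0 i) (fun i => -l i) := by
    obtain ⟨σ, hσ⟩ := hl
    exact ⟨σ, fun i => by simp [hσ i]⟩
  constructor
  · intro j hj
    have h1 := aux_prefix_le M r0 r hr0 hr j hj
    have h2 := aux_prefix_le M (fun i => -l0 i) (fun i => -l i) hnl0 hnl_re j hj
    rw [Finset.sum_neg_distrib, Finset.sum_neg_distrib] at h2
    unfold betaOf
    rw [Finset.sum_sub_distrib, Finset.sum_sub_distrib]
    linarith
  · have hRr := aux_rev_sum M r0 r hr0 hr
    have hRl := aux_rev_sum M (fun i => -l0 i) (fun i => -l i) hnl0 hnl_re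
    have hfilt_eq : ((Finset.range M ×ˢ Finset.range M).filter
          (fun p => p.1 < p.2 ∧ l p.2 < l p.1))
        = ((Finset.range M ×ˢ Finset.range M).filter
          (fun p => p.1 < p.2 ∧ -l p.1 < -l p.2)) := by
      refine Finset.filter_congr fun p _ => ?_
      constructor <;> rintro ⟨h1, h2⟩ <;> exact ⟨h1, by linarith⟩
    have hsecond : ∑ p ∈ (Finset.range M ×ˢ Finset.range M).filter
          (fun p => p.1 < p.2 ∧ l p.2 < l p.1), (l p.1 - l p.2)
        = ∑ i ∈ Finset.range M, (i : ℤ) * (-l i - -l0 i) := by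
      rw [hfilt_eq, ← hRl]
      exact Finset.sum_congr rfl fun p _ => by ring
    have hbeta : ∀ j : ℕ, betaOf dt l0 r0 j - betaOf dt l r j
        = ∑ i ∈ Finset.range j, ((r0 i - l0 i) - (r i - l i)) := by
      intro j
      unfold betaOf
      simp only [Finset.sum_sub_distrib]
      ring
    have hgr : ∑ i ∈ Finset.range M, (r i - r0 i) = 0 := by
      rw [Finset.sum_sub_distrib, aux_sum_inv M r0 r hr, sub_self]
    have hgl : ∑ i ∈ Finset.range M, (l i - l0 i) = 0 := by
      rw [Finset.sum_sub_distrib, aux_sum_inv M l0 l hl, sub_self]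
    calc cogenusLR M l r
        = ∑ i ∈ Finset.range M, (i : ℤ) * (r i - r0 i)
          + ∑ i ∈ Finset.range M, (i : ℤ) * (-l i - -l0 i) := by
          rw [cogenusLR, hRr, hsecond]
      _ = ∑ i ∈ Finset.range M, ((M : ℤ) - i) * ((r0 i - l0 i) - (r i - l i)) := by
          have hx : ∑ i ∈ Finset.range M, ((M : ℤ) - i) * ((r0 i - l0 i) - (r i - l i))
              = ∑ i ∈ Finset.range M, ((M : ℤ) * (-(r i - r0 i) + (l i - l0 i))
                + ((i : ℤ) * (r i - r0 i) + (i : ℤ) * (-l i - -l0 i))) :=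
            Finset.sum_congr rfl fun i _ => by ring
          have hz : ∑ i ∈ Finset.range M, ((M : ℤ) * (-(r i - r0 i) + (l i - l0 i))) = 0 := by
            rw [← Finset.mul_sum, Finset.sum_add_distrib, Finset.sum_neg_distrib, hgr, hgl]
            ring
          rw [hx, Finset.sum_add_distrib, Finset.sum_add_distrib, hz]
          ring
      _ = ∑ j ∈ Finset.range (M + 1), (betaOf dt l0 r0 j - betaOf dt l r j) := by
          rw [Finset.sum_congr rfl fun j _ => hbeta j,
            aux_double_sum (M + 1) (fun i => (r0 i - l0 i) - (r i - l i)),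
            Finset.sum_range_succ]
          push_cast
          rw [show ((M : ℤ) + 1 - 1 - (M : ℤ)) * ((r0 M - l0 M) - (r M - l M)) = 0 by ring,
            add_zero]
          exact Finset.sum_congr rfl fun i _ => by ring
end

section
/- Let Δ be an h-transverse polygon of height M having internal vertices, with left and right direction sequences l_0 and r_0 and top width d^t, and let (l,r) be a reordering of (l_0, r_0). Fix an integer δ ≥ 0 and suppose that every extremal edge of Δ has length at least δ + δ(l,r). Write β = β(d^t, r−l) = (β_0,…,β_M) and let β(Δ) = (β_0(Δ),…,β_M(Δ)) be the width sequence of Δ. besides, β_i = β_i(Δ) whenever i ≤ δ or i ≥ M−δ, and β_i ≥ δ whenever δ < i < M−δ. -/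
open scoped Classical


open Finset


noncomputable def Rset (M : ℕ) (r : ℕ → ℤ) : Finset (ℕ × ℕ) :=
  (Finset.range M ×ˢ Finset.range M).filter (fun p => p.1 < p.2 ∧ r p.1 < r p.2)

noncomputable def Rsum (M : ℕ) (r : ℕ → ℤ) : ℤ := ∑ p ∈ Rset M r, (r p.2 - r p.1)

lemma mem_Rset {M : ℕ} {r : ℕ → ℤ} {p : ℕ × ℕ} :
    p ∈ Rset M r ↔ (p.1 < M ∧ p.2 < M ∧ p.1 < p.2 ∧ r p.1 < r p.2) := by
  simp only [Rset, Finset.mem_filter, Finset.mem_product, Finset.mem_range]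
  tauto

noncomputable def permFn {M : ℕ} (σ : Equiv.Perm (Fin M)) (j : ℕ) : ℕ :=
  if h : j < M then ((σ ⟨j, h⟩ : Fin M) : ℕ) else j

lemma permFn_lt {M : ℕ} (σ : Equiv.Perm (Fin M)) {j : ℕ} (h : j < M) :
    permFn σ j < M := by
  simp only [permFn, dif_pos h]; exact (σ ⟨j, h⟩).2

lemma permFn_symm_apply {M : ℕ} (σ : Equiv.Perm (Fin M)) {j : ℕ} (h : j < M) :
    permFn σ.symm (permFn σ j) = j := by
  simp only [permFn, dif_pos h, dif_pos (σ ⟨j, h⟩).2]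
  have : (⟨((σ ⟨j, h⟩ : Fin M) : ℕ), (σ ⟨j,h⟩).2⟩ : Fin M) = σ ⟨j, h⟩ := by
    apply Fin.ext; rfl
  rw [this, Equiv.symm_apply_apply]

lemma permFn_apply_symm {M : ℕ} (σ : Equiv.Perm (Fin M)) {q : ℕ} (h : q < M) :
    permFn σ (permFn σ.symm q) = q := by
  have := permFn_symm_apply σ.symm (j := q) h
  simpa using this

lemma permFn_inj {M : ℕ} (σ : Equiv.Perm (Fin M)) {a b : ℕ} (ha : a < M) (hb : b < M)
    (h : permFn σ a = permFn σ b) : a = b := by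
  have := congrArg (permFn σ.symm) h
  rwa [permFn_symm_apply σ ha, permFn_symm_apply σ hb] at this

section rearr
variable {M : ℕ} {r0 r : ℕ → ℤ} {σ : Equiv.Perm (Fin M)}
  (hσ : ∀ i : Fin M, r (i : ℕ) = r0 ((σ i : ℕ)))

include hσ

lemma rearr_apply {j : ℕ} (h : j < M) : r j = r0 (permFn σ j) := by
  simp only [permFn, dif_pos h]; exact hσ ⟨j, h⟩

lemma prefix_sum_bound (ha : ∀ ⦃a b : ℕ⦄, a ≤ b → b < M → r0 b ≤ r0 a)
    {i : ℕ} (hi : i ≤ M) :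
    ∑ j ∈ Finset.range i, r0 j ≤ ∑ j ∈ Finset.range i, r j + Rsum M r := by
  set A : Finset ℕ := (Finset.range i).image (permFn σ) with hA
  have hAsub : A ⊆ Finset.range M := by
    intro q hq
    simp only [hA, Finset.mem_image, Finset.mem_range] at hq ⊢
    obtain ⟨j, hj, rfl⟩ := hq
    exact permFn_lt σ (lt_of_lt_of_le hj hi)
  have hAcard : A.card = i := by
    rw [hA, Finset.card_image_of_injOn, Finset.card_range]
    intro a haa b hbb
    exact permFn_inj σ (lt_of_lt_of_le (Finset.mem_range.1 haa) hi)
      (lt_of_lt_of_le (Finset.mem_range.1 hbb) hi)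
  -- prefix sum of r = sum of r0 over A
  have hsumA : ∑ j ∈ Finset.range i, r j = ∑ q ∈ A, r0 q := by
    rw [hA, Finset.sum_image (fun a haa b hbb =>
      permFn_inj σ (lt_of_lt_of_le (Finset.mem_range.1 haa) hi)
        (lt_of_lt_of_le (Finset.mem_range.1 hbb) hi))]
    apply Finset.sum_congr rfl
    intro j hj
    exact rearr_apply hσ (lt_of_lt_of_le (Finset.mem_range.1 hj) hi)
  set s : Finset ℕ := Finset.range i \ A with hs
  set t : Finset ℕ := A \ Finset.range i with ht
  have hsplit1 : ∑ q ∈ Finset.range i, r0 q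
      = ∑ q ∈ Finset.range i ∩ A, r0 q + ∑ q ∈ s, r0 q :=
    (Finset.sum_inter_add_sum_sdiff _ _ _).symm
  have hsplit2 : ∑ q ∈ A, r0 q
      = ∑ q ∈ Finset.range i ∩ A, r0 q + ∑ q ∈ t, r0 q := by
    rw [Finset.inter_comm]
    exact (Finset.sum_inter_add_sum_sdiff _ _ _).symm
  have hcards : s.card = t.card := by
    have h1 := Finset.card_sdiff_add_card_inter (Finset.range i) A
    have h2 := Finset.card_sdiff_add_card_inter A (Finset.range i)
    rw [Finset.inter_comm A (Finset.range i)] at h2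
    rw [Finset.card_range] at h1
    simp only [hs, ht]
    omega
  have key : ∑ q ∈ s, r0 q ≤ ∑ q ∈ t, r0 q + Rsum M r := by
    set e := Finset.equivOfCardEq hcards with he
    have hts : ∑ q ∈ t, r0 q = ∑ x ∈ s.attach, r0 ((e x : ℕ)) := by
      rw [← Finset.sum_attach t (fun q => r0 q)]
      rw [← Finset.univ_eq_attach, ← Finset.univ_eq_attach]
      exact (Equiv.sum_comp e (fun y => r0 (y : ℕ))).symm
    have hss : ∑ q ∈ s, r0 q = ∑ x ∈ s.attach, r0 ((x : ℕ)) :=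
      (Finset.sum_attach s (fun q => r0 q)).symm
    have hdistrib : ∑ x ∈ s.attach, (r0 ((x:ℕ)) - r0 ((e x:ℕ)))
        = ∑ x ∈ s.attach, r0 ((x:ℕ)) - ∑ x ∈ s.attach, r0 ((e x:ℕ)) :=
      Finset.sum_sub_distrib _ _
    have main : ∑ x ∈ s.attach, (r0 ((x:ℕ)) - r0 ((e x:ℕ))) ≤ Rsum M r := by
      -- facts about x and e x
      have hxlt : ∀ x : {q // q ∈ s}, (x : ℕ) < i := by
        intro x
        have hm : (↑x : ℕ) ∈ Finset.range i \ A := x.2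
        exact Finset.mem_range.1 (Finset.mem_sdiff.1 hm).1
      have hxA : ∀ x : {q // q ∈ s}, (x : ℕ) ∉ A := by
        intro x
        have hm : (↑x : ℕ) ∈ Finset.range i \ A := x.2
        exact (Finset.mem_sdiff.1 hm).2
      have hexge : ∀ x : {q // q ∈ s}, i ≤ ((e x : ℕ)) := by
        intro x
        have hm : ((e x : ℕ)) ∈ A \ Finset.range i := (e x).2
        have h2 := (Finset.mem_sdiff.1 hm).2
        simp only [Finset.mem_range] at h2
        omega
      have hexlt : ∀ x : {q // q ∈ s}, ((e x : ℕ)) < M := by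
        intro x
        have hm : ((e x : ℕ)) ∈ A \ Finset.range i := (e x).2
        exact Finset.mem_range.1 (hAsub (Finset.mem_sdiff.1 hm).1)
      -- term nonnegativity
      have hterm : ∀ x : {q // q ∈ s}, r0 ((e x : ℕ)) ≤ r0 ((x : ℕ)) := by
        intro x
        exact ha (le_of_lt (lt_of_lt_of_le (hxlt x) (hexge x))) (hexlt x)
      -- positions
      have hjx : ∀ x : {q // q ∈ s}, i ≤ permFn σ.symm (x : ℕ) ∧ permFn σ.symm (x:ℕ) < M
          ∧ r (permFn σ.symm (x:ℕ)) = r0 (x:ℕ) := by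
        intro x
        have hxM : (x : ℕ) < M := lt_of_lt_of_le (hxlt x) hi
        have h1 : permFn σ.symm (x:ℕ) < M := permFn_lt σ.symm hxM
        refine ⟨?_, h1, ?_⟩
        · by_contra hcon
          push_neg at hcon
          apply hxA x
          rw [hA, Finset.mem_image]
          exact ⟨permFn σ.symm (x:ℕ), Finset.mem_range.2 hcon, permFn_apply_symm σ hxM⟩
        · rw [rearr_apply hσ h1, permFn_apply_symm σ hxM]
      have hjex : ∀ x : {q // q ∈ s}, permFn σ.symm ((e x:ℕ)) < i
          ∧ r (permFn σ.symm ((e x:ℕ))) = r0 ((e x:ℕ)) := by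
        intro x
        have hyA : ((e x : ℕ)) ∈ A := by
          have hm : ((e x : ℕ)) ∈ A \ Finset.range i := (e x).2
          exact (Finset.mem_sdiff.1 hm).1
        rw [hA, Finset.mem_image] at hyA
        obtain ⟨j, hj, hje⟩ := hyA
        have hjM : j < M := lt_of_lt_of_le (Finset.mem_range.1 hj) hi
        have : permFn σ.symm ((e x : ℕ)) = j := by rw [← hje, permFn_symm_apply σ hjM]
        rw [this]
        refine ⟨Finset.mem_range.1 hj, ?_⟩
        rw [rearr_apply hσ hjM, hje]
      -- split off zero terms
      set G := s.attach.filter (fun x => r0 ((e x : ℕ)) < r0 ((x : ℕ))) with hG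
      have hsplitG : ∑ x ∈ s.attach, (r0 ((x:ℕ)) - r0 ((e x:ℕ)))
          = ∑ x ∈ G, (r0 ((x:ℕ)) - r0 ((e x:ℕ))) := by
        rw [hG, Finset.sum_filter]
        apply Finset.sum_congr rfl
        intro x _
        by_cases hc : r0 ((e x : ℕ)) < r0 ((x : ℕ))
        · rw [if_pos hc]
        · rw [if_neg hc]
          have := hterm x
          omega
      rw [hsplitG]
      -- map into Rset
      set φ : {q // q ∈ s} → ℕ × ℕ :=
        fun x => (permFn σ.symm ((e x : ℕ)), permFn σ.symm ((x : ℕ))) with hφ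
      have hinj : ∀ x ∈ G, ∀ y ∈ G, φ x = φ y → x = y := by
        intro x _ y _ hxy
        have h2 := congrArg Prod.snd hxy
        simp only [hφ] at h2
        have hxM : (x : ℕ) < M := lt_of_lt_of_le (hxlt x) hi
        have hyM : (y : ℕ) < M := lt_of_lt_of_le (hxlt y) hi
        have := permFn_inj σ.symm hxM hyM h2
        exact Subtype.ext this
      have hsum_img : ∑ p ∈ G.image φ, (r p.2 - r p.1)
          = ∑ x ∈ G, (r0 ((x:ℕ)) - r0 ((e x:ℕ))) := by
        rw [Finset.sum_image hinj]
        apply Finset.sum_congr rfl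
        intro x _
        simp only [hφ]
        rw [(hjx x).2.2, (hjex x).2]
      have hsub : G.image φ ⊆ Rset M r := by
        intro p hp
        rw [Finset.mem_image] at hp
        obtain ⟨x, hxG, rfl⟩ := hp
        rw [mem_Rset]
        simp only [hφ]
        have hx1 := hjex x
        have hx2 := hjx x
        have hval : r (permFn σ.symm ((e x:ℕ))) < r (permFn σ.symm ((x:ℕ))) := by
          rw [hx1.2, hx2.2.2]
          rw [hG, Finset.mem_filter] at hxG
          exact hxG.2
        exact ⟨lt_of_lt_of_le hx1.1 hi, hx2.2.1, lt_of_lt_of_le hx1.1 hx2.1, hval⟩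
      calc ∑ x ∈ G, (r0 ((x:ℕ)) - r0 ((e x:ℕ))) = ∑ p ∈ G.image φ, (r p.2 - r p.1) :=
            hsum_img.symm
        _ ≤ Rsum M r := by
            apply Finset.sum_le_sum_of_subset_of_nonneg hsub
            intro p hp _
            rw [mem_Rset] at hp
            linarith [hp.2.2.2]
    linarith [hdistrib, main]
  rw [hsumA, hsplit1, hsplit2]
  linarith [key]

end rearr

lemma rearr_card {M : ℕ} {r0 r : ℕ → ℤ} {σ : Equiv.Perm (Fin M)}
    (hσ : ∀ i : Fin M, r (i : ℕ) = r0 ((σ i : ℕ))) (v : ℤ) :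
    ((Finset.range M).filter (fun p => r p = v)).card
      = ((Finset.range M).filter (fun p => r0 p = v)).card := by
  apply Finset.card_bij' (fun a _ => permFn σ a) (fun a _ => permFn σ.symm a)
  · intro a ha
    simp only [Finset.mem_filter, Finset.mem_range] at ha ⊢
    exact ⟨permFn_lt σ ha.1, by rw [← rearr_apply hσ ha.1]; exact ha.2⟩
  · intro a ha
    simp only [Finset.mem_filter, Finset.mem_range] at ha ⊢
    refine ⟨permFn_lt σ.symm ha.1, ?_⟩
    rw [rearr_apply hσ (permFn_lt σ.symm ha.1), permFn_apply_symm σ ha.1]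
    exact ha.2
  · intro a ha
    simp only [Finset.mem_filter, Finset.mem_range] at ha
    exact permFn_symm_apply σ ha.1
  · intro a ha
    simp only [Finset.mem_filter, Finset.mem_range] at ha
    exact permFn_apply_symm σ ha.1

lemma rearr_le_max {M : ℕ} {r0 r : ℕ → ℤ} {σ : Equiv.Perm (Fin M)}
    (hσ : ∀ i : Fin M, r (i : ℕ) = r0 ((σ i : ℕ)))
    (ha : ∀ ⦃a b : ℕ⦄, a ≤ b → b < M → r0 b ≤ r0 a) {j : ℕ} (hj : j < M) :
    r j ≤ r0 0 := by
  rw [rearr_apply hσ hj]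
  exact ha (Nat.zero_le _) (permFn_lt σ hj)

lemma rearr_min_le {M : ℕ} {r0 r : ℕ → ℤ} {σ : Equiv.Perm (Fin M)}
    (hσ : ∀ i : Fin M, r (i : ℕ) = r0 ((σ i : ℕ)))
    (ha : ∀ ⦃a b : ℕ⦄, a ≤ b → b < M → r0 b ≤ r0 a) {j : ℕ} (hj : j < M) :
    r0 (M - 1) ≤ r j := by
  rw [rearr_apply hσ hj]
  exact ha (Nat.le_sub_one_of_lt (permFn_lt σ hj)) (Nat.sub_lt (by omega) one_pos)

lemma Rsum_nonneg (M : ℕ) (r : ℕ → ℤ) : 0 ≤ Rsum M r := by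
  apply Finset.sum_nonneg
  intro p hp
  rw [mem_Rset] at hp
  linarith [hp.2.2.2]

lemma refined_top_bound {M : ℕ} {r0 r : ℕ → ℤ} {σ : Equiv.Perm (Fin M)}
    (hσ : ∀ i : Fin M, r (i : ℕ) = r0 ((σ i : ℕ)))
    (ha : ∀ ⦃a b : ℕ⦄, a ≤ b → b < M → r0 b ≤ r0 a)
    {E i : ℕ} (hEM : E ≤ M) (hiE : i < E)
    (hconst : ∀ j, j < E → r0 j = r0 0) :
    (((E - i : ℕ) : ℤ) + 1) * ∑ j ∈ Finset.range i, (r0 0 - r j) ≤ Rsum M r := by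
  set v := r0 0 with hv
  have hle : ∀ j, j < M → r j ≤ v := fun j hj => rearr_le_max hσ ha hj
  set T := (Finset.range M).filter (fun p => r p = v) with hT
  have hTcard : E ≤ T.card := by
    rw [hT, rearr_card hσ v]
    have hsub : Finset.range E ⊆ (Finset.range M).filter (fun p => r0 p = v) := by
      intro j hj
      rw [Finset.mem_range] at hj
      rw [Finset.mem_filter, Finset.mem_range]
      exact ⟨lt_of_lt_of_le hj hEM, hconst j hj⟩
    calc E = (Finset.range E).card := (Finset.card_range E).symm
      _ ≤ _ := Finset.card_le_card hsub
  set Bi := (Finset.range i).filter (fun j => r j < v) with hBi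
  set m := Bi.card with hm
  have hD : ∑ j ∈ Finset.range i, (v - r j) = ∑ j ∈ Bi, (v - r j) := by
    rw [hBi, Finset.sum_filter]
    apply Finset.sum_congr rfl
    intro j hj
    rw [Finset.mem_range] at hj
    by_cases hc : r j < v
    · rw [if_pos hc]
    · rw [if_neg hc]
      have := hle j (lt_of_lt_of_le (lt_trans hj hiE) hEM)
      omega
  have hDnonneg : 0 ≤ ∑ j ∈ Bi, (v - r j) := by
    apply Finset.sum_nonneg
    intro j hj
    rw [hBi, Finset.mem_filter] at hj
    linarith [hj.2]
  have hcard_j : ∀ j ∈ Bi, (E : ℤ) - i + m ≤ ((T.filter (fun p => j < p)).card : ℤ) := by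
    intro j hj
    rw [hBi, Finset.mem_filter, Finset.mem_range] at hj
    have hsplit := Finset.card_filter_add_card_filter_not
      (s := T) (p := fun p => j < p)
    have hsub2 : T.filter (fun p => ¬ j < p) ⊆ Finset.range i \ Bi := by
      intro p hp
      rw [Finset.mem_filter] at hp
      have hpT : r p = v := by
        have := hp.1
        rw [hT, Finset.mem_filter] at this
        exact this.2
      rw [Finset.mem_sdiff, Finset.mem_range, hBi, Finset.mem_filter]
      constructor
      · omega
      · rw [not_and_or]
        right
        omega
    have hcard2 : (T.filter (fun p => ¬ j < p)).card ≤ i - m := by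
      calc (T.filter (fun p => ¬ j < p)).card ≤ (Finset.range i \ Bi).card :=
            Finset.card_le_card hsub2
        _ = i - m := by
            rw [Finset.card_sdiff_of_subset (Finset.filter_subset _ _), Finset.card_range]
      
    have hmi : m ≤ i := by
      calc m = Bi.card := rfl
        _ ≤ (Finset.range i).card := Finset.card_le_card (Finset.filter_subset _ _)
        _ = i := Finset.card_range i
    omega
  set Q := Bi.biUnion (fun j => (T.filter (fun p => j < p)).image (fun p => (j, p))) with hQ
  have hdisj : (↑Bi : Set ℕ).PairwiseDisjoint
      (fun j => (T.filter (fun p => j < p)).image (fun p => ((j, p) : ℕ × ℕ))) := by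
    intro a _ b _ hab
    simp only [Function.onFun]
    rw [Finset.disjoint_left]
    intro x hxa hxb
    rw [Finset.mem_image] at hxa hxb
    obtain ⟨p1, _, rfl⟩ := hxa
    obtain ⟨p2, _, h2⟩ := hxb
    exact hab (congrArg Prod.fst h2).symm
  have hQsub : Q ⊆ Rset M r := by
    intro x hx
    rw [hQ, Finset.mem_biUnion] at hx
    obtain ⟨j, hj, hx⟩ := hx
    rw [Finset.mem_image] at hx
    obtain ⟨p, hp, rfl⟩ := hx
    rw [Finset.mem_filter] at hp
    have hpT := hp.1
    rw [hT, Finset.mem_filter, Finset.mem_range] at hpT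
    rw [hBi, Finset.mem_filter, Finset.mem_range] at hj
    rw [mem_Rset]
    exact ⟨lt_of_lt_of_le (lt_trans hj.1 hiE) hEM, hpT.1, hp.2, by rw [hpT.2]; exact hj.2⟩
  have hQsum : ∑ p ∈ Q, (r p.2 - r p.1)
      = ∑ j ∈ Bi, ((T.filter (fun p => j < p)).card : ℤ) * (v - r j) := by
    rw [hQ, Finset.sum_biUnion hdisj]
    apply Finset.sum_congr rfl
    intro j hj
    rw [Finset.sum_image (fun a _ b _ h => (congrArg Prod.snd h))]
    have : ∀ p ∈ T.filter (fun p => j < p), r p - r j = v - r j := by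
      intro p hp
      rw [Finset.mem_filter] at hp
      have := hp.1
      rw [hT, Finset.mem_filter] at this
      rw [this.2]
    rw [Finset.sum_congr rfl this, Finset.sum_const, nsmul_eq_mul]
  have hmain : ((E : ℤ) - i + m) * ∑ j ∈ Bi, (v - r j) ≤ Rsum M r := by
    calc ((E : ℤ) - i + m) * ∑ j ∈ Bi, (v - r j)
        = ∑ j ∈ Bi, ((E : ℤ) - i + m) * (v - r j) := by rw [Finset.mul_sum]
      _ ≤ ∑ j ∈ Bi, ((T.filter (fun p => j < p)).card : ℤ) * (v - r j) := by
          apply Finset.sum_le_sum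
          intro j hj
          apply mul_le_mul_of_nonneg_right (hcard_j j hj)
          have := hj
          rw [hBi, Finset.mem_filter] at this
          linarith [this.2]
      _ = ∑ p ∈ Q, (r p.2 - r p.1) := hQsum.symm
      _ ≤ Rsum M r := by
          apply Finset.sum_le_sum_of_subset_of_nonneg hQsub
          intro p hp _
          rw [mem_Rset] at hp
          linarith [hp.2.2.2]
  rw [hD]
  by_cases hm0 : m = 0
  · have : Bi = ∅ := Finset.card_eq_zero.1 hm0
    rw [this]
    simpa using Rsum_nonneg M r
  · have h1 : (((E - i : ℕ) : ℤ) + 1) ≤ (E : ℤ) - i + m := by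
      have : ((E - i : ℕ) : ℤ) = (E : ℤ) - i := by omega
      omega
    calc (((E - i : ℕ) : ℤ) + 1) * ∑ j ∈ Bi, (v - r j)
        ≤ ((E : ℤ) - i + m) * ∑ j ∈ Bi, (v - r j) :=
          mul_le_mul_of_nonneg_right h1 hDnonneg
      _ ≤ Rsum M r := hmain
lemma refined_bot_bound {M : ℕ} {r0 r : ℕ → ℤ} {σ : Equiv.Perm (Fin M)}
    (hσ : ∀ i : Fin M, r (i : ℕ) = r0 ((σ i : ℕ)))
    (ha : ∀ ⦃a b : ℕ⦄, a ≤ b → b < M → r0 b ≤ r0 a)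
    {E i : ℕ} (hEM : E ≤ M) (hiM : i ≤ M) (hilow : M < i + E)
    (hconst : ∀ j, j < M → M ≤ j + E → r0 j = r0 (M - 1)) :
    (((i + E - M : ℕ) : ℤ) + 1) * ∑ j ∈ Finset.Ico i M, (r j - r0 (M - 1)) ≤ Rsum M r := by
  set w := r0 (M - 1) with hw
  have hge : ∀ j, j < M → w ≤ r j := fun j hj => rearr_min_le hσ ha hj
  set T := (Finset.range M).filter (fun p => r p = w) with hT
  have hTcard : E ≤ T.card := by
    rw [hT, rearr_card hσ w]
    have hsub : Finset.Ico (M - E) M ⊆ (Finset.range M).filter (fun p => r0 p = w) := by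
      intro j hj
      rw [Finset.mem_Ico] at hj
      rw [Finset.mem_filter, Finset.mem_range]
      exact ⟨hj.2, hconst j hj.2 (by omega)⟩
    calc E = (Finset.Ico (M - E) M).card := by rw [Nat.card_Ico]; omega
      _ ≤ _ := Finset.card_le_card hsub
  set Bi := (Finset.Ico i M).filter (fun j => w < r j) with hBi
  set m := Bi.card with hm
  have hD : ∑ j ∈ Finset.Ico i M, (r j - w) = ∑ j ∈ Bi, (r j - w) := by
    rw [hBi, Finset.sum_filter]
    apply Finset.sum_congr rfl
    intro j hj
    rw [Finset.mem_Ico] at hj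
    by_cases hc : w < r j
    · rw [if_pos hc]
    · rw [if_neg hc]
      have := hge j hj.2
      omega
  have hDnonneg : 0 ≤ ∑ j ∈ Bi, (r j - w) := by
    apply Finset.sum_nonneg
    intro j hj
    rw [hBi, Finset.mem_filter] at hj
    linarith [hj.2]
  have hcard_j : ∀ j ∈ Bi, (E : ℤ) - ((M : ℤ) - i) + m ≤ ((T.filter (fun p => p < j)).card : ℤ) := by
    intro j hj
    rw [hBi, Finset.mem_filter, Finset.mem_Ico] at hj
    have hsplit := Finset.card_filter_add_card_filter_not
      (s := T) (p := fun p => p < j)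
    have hsub2 : T.filter (fun p => ¬ p < j) ⊆ Finset.Ico i M \ Bi := by
      intro p hp
      rw [Finset.mem_filter] at hp
      have hpT : p < M ∧ r p = w := by
        have := hp.1
        rw [hT, Finset.mem_filter, Finset.mem_range] at this
        exact this
      rw [Finset.mem_sdiff, Finset.mem_Ico, hBi, Finset.mem_filter]
      constructor
      · omega
      · rw [not_and_or]
        right
        omega
    have hcard2 : (T.filter (fun p => ¬ p < j)).card ≤ (M - i) - m := by
      calc (T.filter (fun p => ¬ p < j)).card ≤ (Finset.Ico i M \ Bi).card :=
            Finset.card_le_card hsub2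
        _ = (M - i) - m := by
            rw [Finset.card_sdiff_of_subset (Finset.filter_subset _ _), Nat.card_Ico]
    have hmi : m ≤ M - i := by
      calc m = Bi.card := rfl
        _ ≤ (Finset.Ico i M).card := Finset.card_le_card (Finset.filter_subset _ _)
        _ = M - i := Nat.card_Ico i M
    omega
  set Q := Bi.biUnion (fun j => (T.filter (fun p => p < j)).image (fun p => (p, j))) with hQ
  have hdisj : (↑Bi : Set ℕ).PairwiseDisjoint
      (fun j => (T.filter (fun p => p < j)).image (fun p => ((p, j) : ℕ × ℕ))) := by
    intro a _ b _ hab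
    simp only [Function.onFun]
    rw [Finset.disjoint_left]
    intro x hxa hxb
    rw [Finset.mem_image] at hxa hxb
    obtain ⟨p1, _, rfl⟩ := hxa
    obtain ⟨p2, _, h2⟩ := hxb
    exact hab (congrArg Prod.snd h2).symm
  have hQsub : Q ⊆ Rset M r := by
    intro x hx
    rw [hQ, Finset.mem_biUnion] at hx
    obtain ⟨j, hj, hx⟩ := hx
    rw [Finset.mem_image] at hx
    obtain ⟨p, hp, rfl⟩ := hx
    rw [Finset.mem_filter] at hp
    have hpT := hp.1
    rw [hT, Finset.mem_filter, Finset.mem_range] at hpT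
    rw [hBi, Finset.mem_filter, Finset.mem_Ico] at hj
    rw [mem_Rset]
    exact ⟨hpT.1, hj.1.2, hp.2, by rw [hpT.2]; exact hj.2⟩
  have hQsum : ∑ p ∈ Q, (r p.2 - r p.1)
      = ∑ j ∈ Bi, ((T.filter (fun p => p < j)).card : ℤ) * (r j - w) := by
    rw [hQ, Finset.sum_biUnion hdisj]
    apply Finset.sum_congr rfl
    intro j hj
    rw [Finset.sum_image (fun a _ b _ h => (congrArg Prod.fst h))]
    have : ∀ p ∈ T.filter (fun p => p < j), r j - r p = r j - w := by
      intro p hp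
      rw [Finset.mem_filter] at hp
      have := hp.1
      rw [hT, Finset.mem_filter] at this
      rw [this.2]
    rw [Finset.sum_congr rfl this, Finset.sum_const, nsmul_eq_mul]
  have hmain : ((E : ℤ) - ((M : ℤ) - i) + m) * ∑ j ∈ Bi, (r j - w) ≤ Rsum M r := by
    calc ((E : ℤ) - ((M : ℤ) - i) + m) * ∑ j ∈ Bi, (r j - w)
        = ∑ j ∈ Bi, ((E : ℤ) - ((M : ℤ) - i) + m) * (r j - w) := by rw [Finset.mul_sum]
      _ ≤ ∑ j ∈ Bi, ((T.filter (fun p => p < j)).card : ℤ) * (r j - w) := by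
          apply Finset.sum_le_sum
          intro j hj
          apply mul_le_mul_of_nonneg_right (hcard_j j hj)
          have := hj
          rw [hBi, Finset.mem_filter] at this
          linarith [this.2]
      _ = ∑ p ∈ Q, (r p.2 - r p.1) := hQsum.symm
      _ ≤ Rsum M r := by
          apply Finset.sum_le_sum_of_subset_of_nonneg hQsub
          intro p hp _
          rw [mem_Rset] at hp
          linarith [hp.2.2.2]
  rw [hD]
  by_cases hm0 : m = 0
  · have : Bi = ∅ := Finset.card_eq_zero.1 hm0
    rw [this]
    simpa using Rsum_nonneg M r
  · have h1 : (((i + E - M : ℕ) : ℤ) + 1) ≤ (E : ℤ) - ((M : ℤ) - i) + m := by omega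
    calc (((i + E - M : ℕ) : ℤ) + 1) * ∑ j ∈ Bi, (r j - w)
        ≤ ((E : ℤ) - ((M : ℤ) - i) + m) * ∑ j ∈ Bi, (r j - w) :=
          mul_le_mul_of_nonneg_right h1 hDnonneg
      _ ≤ Rsum M r := hmain

lemma entry_top_eq {M : ℕ} {r0 r : ℕ → ℤ} {σ : Equiv.Perm (Fin M)}
    (hσ : ∀ i : Fin M, r (i : ℕ) = r0 ((σ i : ℕ)))
    (ha : ∀ ⦃a b : ℕ⦄, a ≤ b → b < M → r0 b ≤ r0 a)
    {E δn : ℕ} (hEM : E ≤ M)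
    (hconst : ∀ j, j < E → r0 j = r0 0) (hR : Rsum M r ≤ (E : ℤ) - (δn : ℤ))
    {j : ℕ} (hj : j < δn) : r j = r0 0 := by
  have hδE : (δn : ℤ) ≤ (E : ℤ) := by have := Rsum_nonneg M r; omega
  have hjM : j < M := by omega
  have hle := rearr_le_max hσ ha hjM
  by_contra hne
  have hlt : r j < r0 0 := lt_of_le_of_ne hle hne
  set v := r0 0 with hv
  set T := (Finset.range M).filter (fun p => r p = v) with hT
  have hTcard : E ≤ T.card := by
    rw [hT, rearr_card hσ v]
    have hsub : Finset.range E ⊆ (Finset.range M).filter (fun p => r0 p = v) := by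
      intro a haa
      rw [Finset.mem_range] at haa
      rw [Finset.mem_filter, Finset.mem_range]
      exact ⟨lt_of_lt_of_le haa hEM, hconst a haa⟩
    calc E = (Finset.range E).card := (Finset.card_range E).symm
      _ ≤ _ := Finset.card_le_card hsub
  set Tj := T.filter (fun p => j < p) with hTj
  have hTjcard : (E : ℤ) - j ≤ (Tj.card : ℤ) := by
    have hsplit := Finset.card_filter_add_card_filter_not
      (s := T) (p := fun p => j < p)
    rw [show T.filter (fun p => j < p) = Tj from rfl] at hsplit
    have hsub2 : T.filter (fun p => ¬ j < p) ⊆ Finset.range j := by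
      intro p hp
      rw [Finset.mem_filter] at hp
      have hpT : r p = v := by
        have := hp.1
        rw [hT, Finset.mem_filter] at this
        exact this.2
      rw [Finset.mem_range]
      have : p ≠ j := by
        intro h
        rw [h] at hpT
        exact hne hpT
      omega
    have := Finset.card_le_card hsub2
    rw [Finset.card_range] at this
    omega
  have hQsub : Tj.image (fun p => (j, p)) ⊆ Rset M r := by
    intro x hx
    rw [Finset.mem_image] at hx
    obtain ⟨p, hp, rfl⟩ := hx
    rw [hTj, Finset.mem_filter] at hp
    have hpT := hp.1
    rw [hT, Finset.mem_filter, Finset.mem_range] at hpT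
    rw [mem_Rset]
    exact ⟨hjM, hpT.1, hp.2, by rw [hpT.2]; exact hlt⟩
  have hQsum : ∑ p ∈ Tj.image (fun p => (j, p)), (r p.2 - r p.1)
      = ∑ p ∈ Tj, (v - r j) := by
    rw [Finset.sum_image (fun a _ b _ h => (congrArg Prod.snd h))]
    apply Finset.sum_congr rfl
    intro p hp
    rw [hTj, Finset.mem_filter] at hp
    have := hp.1
    rw [hT, Finset.mem_filter] at this
    rw [this.2]
  have hfinal : (E : ℤ) - j ≤ Rsum M r := by
    calc (E : ℤ) - j ≤ (Tj.card : ℤ) := hTjcard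
      _ ≤ (Tj.card : ℤ) * (v - r j) := by nlinarith [hlt]
      _ = ∑ p ∈ Tj, (v - r j) := by rw [Finset.sum_const, nsmul_eq_mul]
      _ = ∑ p ∈ Tj.image (fun p => (j, p)), (r p.2 - r p.1) := hQsum.symm
      _ ≤ Rsum M r := by
          apply Finset.sum_le_sum_of_subset_of_nonneg hQsub
          intro p hp _
          rw [mem_Rset] at hp
          linarith [hp.2.2.2]
  omega

lemma entry_bot_eq {M : ℕ} {r0 r : ℕ → ℤ} {σ : Equiv.Perm (Fin M)}
    (hσ : ∀ i : Fin M, r (i : ℕ) = r0 ((σ i : ℕ)))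
    (ha : ∀ ⦃a b : ℕ⦄, a ≤ b → b < M → r0 b ≤ r0 a)
    {E δn : ℕ} (hEM : E ≤ M)
    (hconst : ∀ j, j < M → M ≤ j + E → r0 j = r0 (M - 1))
    (hR : Rsum M r ≤ (E : ℤ) - (δn : ℤ))
    {j : ℕ} (hjM : j < M) (hj : M ≤ j + δn) : r j = r0 (M - 1) := by
  have hδE : (δn : ℤ) ≤ (E : ℤ) := by have := Rsum_nonneg M r; omega
  have hge := rearr_min_le hσ ha hjM
  by_contra hne
  have hlt : r0 (M - 1) < r j := lt_of_le_of_ne hge (fun h => hne h.symm)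
  set w := r0 (M - 1) with hw
  set T := (Finset.range M).filter (fun p => r p = w) with hT
  have hTcard : E ≤ T.card := by
    rw [hT, rearr_card hσ w]
    have hsub : Finset.Ico (M - E) M ⊆ (Finset.range M).filter (fun p => r0 p = w) := by
      intro a haa
      rw [Finset.mem_Ico] at haa
      rw [Finset.mem_filter, Finset.mem_range]
      exact ⟨haa.2, hconst a haa.2 (by omega)⟩
    calc E = (Finset.Ico (M - E) M).card := by rw [Nat.card_Ico]; omega
      _ ≤ _ := Finset.card_le_card hsub
  set Tj := T.filter (fun p => p < j) with hTj
  have hTjcard : (E : ℤ) - ((M : ℤ) - 1 - j) ≤ (Tj.card : ℤ) := by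
    have hsplit := Finset.card_filter_add_card_filter_not
      (s := T) (p := fun p => p < j)
    rw [show T.filter (fun p => p < j) = Tj from rfl] at hsplit
    have hsub2 : T.filter (fun p => ¬ p < j) ⊆ Finset.Ico (j + 1) M := by
      intro p hp
      rw [Finset.mem_filter] at hp
      have hpT : p < M ∧ r p = w := by
        have := hp.1
        rw [hT, Finset.mem_filter, Finset.mem_range] at this
        exact this
      rw [Finset.mem_Ico]
      have : p ≠ j := by
        intro h
        rw [h] at hpT
        exact hne hpT.2
      omega
    have := Finset.card_le_card hsub2
    rw [Nat.card_Ico] at this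
    omega
  have hQsub : Tj.image (fun p => (p, j)) ⊆ Rset M r := by
    intro x hx
    rw [Finset.mem_image] at hx
    obtain ⟨p, hp, rfl⟩ := hx
    rw [hTj, Finset.mem_filter] at hp
    have hpT := hp.1
    rw [hT, Finset.mem_filter, Finset.mem_range] at hpT
    rw [mem_Rset]
    exact ⟨hpT.1, hjM, hp.2, by rw [hpT.2]; exact hlt⟩
  have hQsum : ∑ p ∈ Tj.image (fun p => (p, j)), (r p.2 - r p.1)
      = ∑ p ∈ Tj, (r j - w) := by
    rw [Finset.sum_image (fun a _ b _ h => (congrArg Prod.fst h))]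
    apply Finset.sum_congr rfl
    intro p hp
    rw [hTj, Finset.mem_filter] at hp
    have := hp.1
    rw [hT, Finset.mem_filter] at this
    rw [this.2]
  have hfinal : (E : ℤ) - ((M : ℤ) - 1 - j) ≤ Rsum M r := by
    calc (E : ℤ) - ((M : ℤ) - 1 - j) ≤ (Tj.card : ℤ) := hTjcard
      _ ≤ (Tj.card : ℤ) * (r j - w) := by nlinarith [hlt]
      _ = ∑ p ∈ Tj, (r j - w) := by rw [Finset.sum_const, nsmul_eq_mul]
      _ = ∑ p ∈ Tj.image (fun p => (p, j)), (r p.2 - r p.1) := hQsum.symm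
      _ ≤ Rsum M r := by
          apply Finset.sum_le_sum_of_subset_of_nonneg hQsub
          intro p hp _
          rw [mem_Rset] at hp
          linarith [hp.2.2.2]
  omega




lemma beta_eq_top (P : HTransverse) (k : ℕ) :
    P.beta k = (P.dt : ℤ) + ∑ j ∈ Finset.range k, (P.r j - P.l j) := rfl

lemma beta_eq_bot (P : HTransverse) {k : ℕ} (hk : k ≤ P.M) :
    P.beta k = (P.db : ℤ) - ∑ j ∈ Finset.Ico k P.M, (P.r j - P.l j) := by
  have hsplit := Finset.sum_range_add_sum_Ico (fun j => P.r j - P.l j) hk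
  have hclose := P.width_closes
  rw [beta_eq_top]
  linarith

lemma width_ge {P : HTransverse} {E N : ℕ}
    (hNv : P.IsInternalVertex N) (hNE : E ≤ N) (hNM : N + E ≤ P.M) :
    ∀ i, E ≤ i → i + E ≤ P.M → (E : ℤ) ≤ P.beta i := by
  intro i hiE hiM
  set M := P.M with hM
  have hN0 : 0 < N ∧ N < M := by
    rcases hNv with h | h
    · exact ⟨h.1, h.2.1⟩
    · exact ⟨h.1, h.2.1⟩
  by_cases hE0 : E = 0
  · rw [hE0]
    push_cast
    rcases Nat.eq_zero_or_pos i with h0 | hpos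
    · rw [h0, beta_eq_top]
      simp
    · rcases eq_or_lt_of_le (by omega : i ≤ M) with hiM' | hiM'
      · rw [hiM', beta_eq_bot P (le_refl M)]
        simp [hM]
      · exact le_of_lt (P.width_pos i hpos hiM')
  -- E ≥ 1 from here
  have hE1 : 1 ≤ E := by omega
  have hi1 : 1 ≤ i := by omega
  have hiM1 : i + 1 ≤ M := by omega
  set d : ℕ → ℤ := fun j => P.r j - P.l j with hd
  have hdant : ∀ ⦃a b : ℕ⦄, a ≤ b → b < M → d b ≤ d a := by
    intro a b hab hb
    have h1 := P.r_antitone hab hb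
    have h2 := P.l_monotone hab hb
    simp only [hd]
    linarith
  have hvert : d N ≤ d (N - 1) - 1 := by
    rcases hNv with h | h
    · have h1 : P.r N ≤ P.r (N - 1) := P.r_antitone (by omega) h.2.1
      have h2 : P.l (N - 1) ≤ P.l N := P.l_monotone (by omega) h.2.1
      have h3 : P.r N ≠ P.r (N - 1) := fun hh => h.2.2 hh.symm
      simp only [hd]
      omega
    · have h1 : P.r N ≤ P.r (N - 1) := P.r_antitone (by omega) h.2.1
      have h2 : P.l (N - 1) ≤ P.l N := P.l_monotone (by omega) h.2.1
      have h3 : P.l (N - 1) ≠ P.l N := h.2.2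
      simp only [hd]
      omega
  rcases lt_or_ge 0 (d (i - 1)) with hpos | hnp
  · -- increments at least 1 up to i
    have hbound : ∀ j ∈ Finset.range i, (1 : ℤ) ≤ d j := by
      intro j hj
      rw [Finset.mem_range] at hj
      have := hdant (by omega : j ≤ i - 1) (by omega : i - 1 < M)
      omega
    have hsum : (i : ℤ) ≤ ∑ j ∈ Finset.range i, d j := by
      calc (i : ℤ) = ∑ _j ∈ Finset.range i, (1 : ℤ) := by
            rw [Finset.sum_const, Finset.card_range, nsmul_eq_mul, mul_one]
        _ ≤ _ := Finset.sum_le_sum hbound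
    rw [beta_eq_top]
    have hdtn : (0 : ℤ) ≤ (P.dt : ℤ) := Int.natCast_nonneg _
    have : (E : ℤ) ≤ (i : ℤ) := by exact_mod_cast Nat.cast_le.2 hiE
    simp only [hd] at hsum
    linarith
  · rcases lt_or_ge (d i) 0 with hneg | hnn
    · have hbound : ∀ j ∈ Finset.Ico i M, d j ≤ -1 := by
        intro j hj
        rw [Finset.mem_Ico] at hj
        have := hdant hj.1 hj.2
        omega
      have hsum : ∑ j ∈ Finset.Ico i M, d j ≤ -((M : ℤ) - i) := by
        calc ∑ j ∈ Finset.Ico i M, d j ≤ ∑ _j ∈ Finset.Ico i M, (-1 : ℤ) :=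
              Finset.sum_le_sum hbound
          _ = -((M : ℤ) - i) := by
              rw [Finset.sum_const, Nat.card_Ico, nsmul_eq_mul]
              have : ((M - i : ℕ) : ℤ) = (M : ℤ) - i := by omega
              rw [this]; ring
      rw [beta_eq_bot P (by omega : i ≤ M)]
      have hdbn : (0 : ℤ) ≤ (P.db : ℤ) := Int.natCast_nonneg _
      have hEMi : (E : ℤ) ≤ (M : ℤ) - i := by omega
      simp only [hd] at hsum
      linarith
    · -- d (i-1) ≤ 0 ≤ d i, so both are 0
      have h0 : d i ≤ d (i - 1) := hdant (by omega) (by omega)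
      have hdi : d i = 0 := by omega
      have hdi1 : d (i - 1) = 0 := by omega
      rcases lt_trichotomy N i with hNi | hNi | hNi
      · -- N < i
        have hdN : 0 ≤ d N := by
          have := hdant (by omega : N ≤ i - 1) (by omega : i - 1 < M)
          omega
        have hdN1 : 1 ≤ d (N - 1) := by omega
        have hb1 : ∀ j ∈ Finset.range N, (1 : ℤ) ≤ d j := by
          intro j hj
          rw [Finset.mem_range] at hj
          have := hdant (by omega : j ≤ N - 1) (by omega : N - 1 < M)
          omega
        have hb2 : ∀ j ∈ Finset.Ico N i, (0 : ℤ) ≤ d j := by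
          intro j hj
          rw [Finset.mem_Ico] at hj
          have := hdant (by omega : j ≤ i - 1) (by omega : i - 1 < M)
          omega
        have hs1 : (N : ℤ) ≤ ∑ j ∈ Finset.range N, d j := by
          calc (N : ℤ) = ∑ _j ∈ Finset.range N, (1 : ℤ) := by
                rw [Finset.sum_const, Finset.card_range, nsmul_eq_mul, mul_one]
            _ ≤ _ := Finset.sum_le_sum hb1
        have hs2 : (0 : ℤ) ≤ ∑ j ∈ Finset.Ico N i, d j := Finset.sum_nonneg hb2
        have hsplit := Finset.sum_range_add_sum_Ico d (le_of_lt hNi)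
        rw [beta_eq_top]
        have hdtn : (0 : ℤ) ≤ (P.dt : ℤ) := Int.natCast_nonneg _
        have hEN : (E : ℤ) ≤ (N : ℤ) := by exact_mod_cast Nat.cast_le.2 hNE
        simp only [hd] at hs1 hs2 hsplit
        linarith
      · -- N = i : contradiction with vertex drop
        exfalso
        rw [hNi] at hvert
        omega
      · -- i < N
        have hdN1' : d (N - 1) ≤ 0 := by
          have := hdant (by omega : i ≤ N - 1) (by omega : N - 1 < M)
          omega
        have hdN : d N ≤ -1 := by omega
        have hb1 : ∀ j ∈ Finset.Ico i N, d j ≤ 0 := by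
          intro j hj
          rw [Finset.mem_Ico] at hj
          have := hdant hj.1 (by omega : j < M)
          omega
        have hb2 : ∀ j ∈ Finset.Ico N M, d j ≤ -1 := by
          intro j hj
          rw [Finset.mem_Ico] at hj
          have := hdant hj.1 hj.2
          omega
        have hs1 : ∑ j ∈ Finset.Ico i N, d j ≤ 0 := Finset.sum_nonpos hb1
        have hs2 : ∑ j ∈ Finset.Ico N M, d j ≤ -((M : ℤ) - N) := by
          calc ∑ j ∈ Finset.Ico N M, d j ≤ ∑ _j ∈ Finset.Ico N M, (-1 : ℤ) :=
                Finset.sum_le_sum hb2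
            _ = -((M : ℤ) - N) := by
                rw [Finset.sum_const, Nat.card_Ico, nsmul_eq_mul]
                have : ((M - N : ℕ) : ℤ) = (M : ℤ) - N := by omega
                rw [this]; ring
        have hsplit : ∑ j ∈ Finset.Ico i N, d j + ∑ j ∈ Finset.Ico N M, d j
            = ∑ j ∈ Finset.Ico i M, d j :=
          Finset.sum_Ico_consecutive d (by omega) (by omega)
        rw [beta_eq_bot P (by omega : i ≤ M)]
        have hdbn : (0 : ℤ) ≤ (P.db : ℤ) := Int.natCast_nonneg _
        have hEMN : (E : ℤ) ≤ (M : ℤ) - N := by omega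
        simp only [hd] at hs1 hs2 hsplit
        linarith

lemma rearr_sum {M : ℕ} {r0 r : ℕ → ℤ} {σ : Equiv.Perm (Fin M)}
    (hσ : ∀ i : Fin M, r (i : ℕ) = r0 ((σ i : ℕ))) :
    ∑ j ∈ Finset.range M, r j = ∑ j ∈ Finset.range M, r0 j := by
  have h1 : ∑ j ∈ Finset.range M, r j = ∑ j ∈ Finset.range M, r0 (permFn σ j) := by
    apply Finset.sum_congr rfl
    intro j hj
    exact rearr_apply hσ (Finset.mem_range.1 hj)
  have himg : (Finset.range M).image (permFn σ) = Finset.range M := by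
    apply Finset.eq_of_subset_of_card_le
    · intro q hq
      simp only [Finset.mem_image, Finset.mem_range] at hq ⊢
      obtain ⟨j, hj, rfl⟩ := hq
      exact permFn_lt σ hj
    · rw [Finset.card_image_of_injOn]
      intro a ha b hb
      exact permFn_inj σ (Finset.mem_range.1 ha) (Finset.mem_range.1 hb)
  rw [h1, ← Finset.sum_image (g := permFn σ) (f := fun q => r0 q)
    (fun a ha b hb => permFn_inj σ (Finset.mem_range.1 ha) (Finset.mem_range.1 hb)), himg]


lemma cogenusLR_eq (M : ℕ) (l r : ℕ → ℤ) :
    cogenusLR M l r = Rsum M r + Rsum M (fun j => -(l j)) := by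
  unfold cogenusLR Rsum Rset
  congr 1
  have h : ∀ p : ℕ × ℕ, (p.1 < p.2 ∧ l p.2 < l p.1) ↔ (p.1 < p.2 ∧ -(l p.1) < -(l p.2)) := by
    intro p; constructor <;> (rintro ⟨h1, h2⟩; exact ⟨h1, by linarith⟩)
  rw [Finset.filter_congr (fun p _ => h p)]
  apply Finset.sum_congr rfl
  intro p _; ring


lemma arith_key_top (E i δ dt dd : ℤ) (hdt : 0 ≤ dt) (hδ0 : 0 ≤ δ) (h2 : δ < i) (h3 : i < E)
    (hcase : 1 ≤ dd ∨ (dd ≤ 0 ∧ E ≤ dt + E * dd)) :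
    E - δ ≤ ((E - i) + 1) * (dt + i * dd - δ) := by
  rcases hcase with hd1 | ⟨hd0, hE⟩
  · have hB : i - δ ≤ dt + i * dd - δ := by
      nlinarith [mul_nonneg (by omega : (0:ℤ) ≤ i) (by omega : (0:ℤ) ≤ dd - 1)]
    nlinarith [mul_le_mul_of_nonneg_left hB (by omega : (0:ℤ) ≤ E - i + 1),
      mul_nonneg (by omega : (0:ℤ) ≤ E - i) (by omega : (0:ℤ) ≤ i - δ - 1)]
  · have hB : E - δ ≤ dt + i * dd - δ := by
      nlinarith [mul_nonneg (by omega : (0:ℤ) ≤ E - i) (by omega : (0:ℤ) ≤ -dd)]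
    have h0 : (0:ℤ) ≤ dt + i * dd - δ := by omega
    have h1 : dt + i * dd - δ ≤ ((E - i) + 1) * (dt + i * dd - δ) :=
      le_mul_of_one_le_left h0 (by omega)
    linarith only [hB, h1]

lemma arith_key_bot (E i' δ db dd : ℤ) (hdb : 0 ≤ db) (hδ0 : 0 ≤ δ) (h2 : δ < i') (h3 : i' < E)
    (hcase : dd ≤ -1 ∨ (0 ≤ dd ∧ E ≤ db - E * dd)) :
    E - δ ≤ ((E - i') + 1) * (db - i' * dd - δ) := by
  rcases hcase with hd1 | ⟨hd0, hE⟩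
  · have hB : i' - δ ≤ db - i' * dd - δ := by
      nlinarith [mul_nonneg (by omega : (0:ℤ) ≤ i') (by omega : (0:ℤ) ≤ -dd - 1)]
    nlinarith [mul_le_mul_of_nonneg_left hB (by omega : (0:ℤ) ≤ E - i' + 1),
      mul_nonneg (by omega : (0:ℤ) ≤ E - i') (by omega : (0:ℤ) ≤ i' - δ - 1)]
  · have hB : E - δ ≤ db - i' * dd - δ := by
      nlinarith [mul_nonneg (by omega : (0:ℤ) ≤ E - i') hd0]
    have h0 : (0:ℤ) ≤ db - i' * dd - δ := by omega
    have h1 : db - i' * dd - δ ≤ ((E - i') + 1) * (db - i' * dd - δ) :=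
      le_mul_of_one_le_left h0 (by omega)
    linarith only [hB, h1]

set_option maxHeartbeats 1000000 in
/-- let `Δ` be an h-transverse polygon of height `M` having internal vertices,
`(l, r)` a reordering of `(l_0, r_0)`, and `δ ≥ 0` with every extremal edge of `Δ` of length
at least `δ + δ(l, r)`.  Writing `β = β(d^t, r − l)` and `β(Δ)` for the width sequence, one
has `β_i = β_i(Δ)` whenever `i ≤ δ` or `i ≥ M − δ`, and `β_i ≥ δ` whenever `δ < i < M − δ`. -/
theorem beta_of_reordering_bounds (P : HTransverse)
    (hIV : ∃ N, P.IsInternalVertex N)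
    (l r : ℕ → ℤ) (hl : IsRearrangement P.M P.l l) (hr : IsRearrangement P.M P.r r)
    (δ : ℕ) (hext : P.ExtremalGE ((δ : ℤ) + cogenusLR P.M l r)) :
    (∀ i, i ≤ P.M → ((i : ℤ) ≤ (δ : ℤ) ∨ (P.M : ℤ) - (δ : ℤ) ≤ (i : ℤ)) →
      betaOf (P.dt : ℤ) l r i = P.beta i) ∧
    (∀ i, i ≤ P.M → (δ : ℤ) < (i : ℤ) → (i : ℤ) < (P.M : ℤ) - (δ : ℤ) →
      (δ : ℤ) ≤ betaOf (P.dt : ℤ) l r i) := by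
  obtain ⟨σr, hσr⟩ := hr
  obtain ⟨σl, hσl⟩ := hl
  have hσl' : ∀ i : Fin P.M, -(l (i : ℕ)) = -(P.l ((σl i : ℕ))) := by
    intro i; rw [hσl i]
  have har : ∀ ⦃a b : ℕ⦄, a ≤ b → b < P.M → P.r b ≤ P.r a := fun a b hab hb =>
    P.r_antitone hab hb
  have hal : ∀ ⦃a b : ℕ⦄, a ≤ b → b < P.M → -(P.l b) ≤ -(P.l a) := by
    intro a b hab hb
    have := P.l_monotone hab hb
    linarith
  have hcsplit : cogenusLR P.M l r = Rsum P.M r + Rsum P.M (fun j => -(l j)) :=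
    cogenusLR_eq P.M l r
  set c : ℤ := cogenusLR P.M l r with hcdef
  have hR0 : 0 ≤ Rsum P.M r := Rsum_nonneg P.M r
  have hL0 : 0 ≤ Rsum P.M (fun j => -(l j)) := Rsum_nonneg P.M _
  have hc0 : 0 ≤ c := by rw [hcsplit]; exact add_nonneg hR0 hL0
  set E : ℕ := δ + c.toNat with hEdef
  have hEc : (E : ℤ) = (δ : ℤ) + c := by
    rw [hEdef]
    push_cast
    rw [Int.toNat_of_nonneg hc0]
  obtain ⟨N, hN⟩ := hIV
  have hNb := hext N hN
  have hN0 : 0 < N ∧ N < P.M := by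
    rcases hN with h | h
    · exact ⟨h.1, h.2.1⟩
    · exact ⟨h.1, h.2.1⟩
  have hNE : E ≤ N := by omega
  have hNM : N + E ≤ P.M := by omega
  have hEM : E ≤ P.M := by omega
  have h2EM : E + E ≤ P.M := by omega
  have hδE : δ ≤ E := by omega
  have hRc : Rsum P.M r ≤ (E : ℤ) - (δ : ℤ) := by omega
  have hLc : Rsum P.M (fun j => -(l j)) ≤ (E : ℤ) - (δ : ℤ) := by omega
  -- constancy of directions near the top
  have hrtop : ∀ j, j < E → P.r j = P.r 0 := by
    intro j
    induction j with
    | zero => intro _; rfl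
    | succ n ih =>
      intro hj
      have hstep : P.r (n + 1) = P.r n := by
        by_contra hne
        have hv : P.IsRightVertex (n + 1) :=
          ⟨Nat.succ_pos n, by omega, by simpa using fun hh => hne hh.symm⟩
        have := (hext (n + 1) (Or.inl hv)).1
        push_cast at this
        omega
      rw [hstep]; exact ih (by omega)
  have hltop : ∀ j, j < E → P.l j = P.l 0 := by
    intro j
    induction j with
    | zero => intro _; rfl
    | succ n ih =>
      intro hj
      have hstep : P.l (n + 1) = P.l n := by
        by_contra hne
        have hv : P.IsLeftVertex (n + 1) :=
          ⟨Nat.succ_pos n, by omega, by simpa using fun hh => hne hh.symm⟩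
        have := (hext (n + 1) (Or.inr hv)).1
        push_cast at this
        omega
      rw [hstep]; exact ih (by omega)
  -- constancy near the bottom
  have hrbotAux : ∀ t j, j < P.M → P.M ≤ j + E → P.M - 1 - j ≤ t → P.r j = P.r (P.M - 1) := by
    intro t
    induction t with
    | zero =>
      intro j hj1 hj2 hj3
      have : j = P.M - 1 := by omega
      rw [this]
    | succ n ih =>
      intro j hj1 hj2 hj3
      rcases eq_or_lt_of_le (by omega : j ≤ P.M - 1) with he | hlt
      · rw [he]
      · have hstep : P.r j = P.r (j + 1) := by
          by_contra hne
          have hv : P.IsRightVertex (j + 1) :=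
            ⟨Nat.succ_pos j, by omega, by simpa using hne⟩
          have := (hext (j + 1) (Or.inl hv)).2
          push_cast at this
          omega
        rw [hstep]
        exact ih (j + 1) (by omega) (by omega) (by omega)
  have hrbot : ∀ j, j < P.M → P.M ≤ j + E → P.r j = P.r (P.M - 1) := fun j h1 h2 =>
    hrbotAux (P.M - 1 - j) j h1 h2 (le_refl _)
  have hlbotAux : ∀ t j, j < P.M → P.M ≤ j + E → P.M - 1 - j ≤ t → P.l j = P.l (P.M - 1) := by
    intro t
    induction t with
    | zero =>
      intro j hj1 hj2 hj3
      have : j = P.M - 1 := by omega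
      rw [this]
    | succ n ih =>
      intro j hj1 hj2 hj3
      rcases eq_or_lt_of_le (by omega : j ≤ P.M - 1) with he | hlt
      · rw [he]
      · have hstep : P.l j = P.l (j + 1) := by
          by_contra hne
          have hv : P.IsLeftVertex (j + 1) :=
            ⟨Nat.succ_pos j, by omega, by simpa using hne⟩
          have := (hext (j + 1) (Or.inr hv)).2
          push_cast at this
          omega
        rw [hstep]
        exact ih (j + 1) (by omega) (by omega) (by omega)
  have hlbot : ∀ j, j < P.M → P.M ≤ j + E → P.l j = P.l (P.M - 1) := fun j h1 h2 =>
    hlbotAux (P.M - 1 - j) j h1 h2 (le_refl _)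
  have hltop' : ∀ j, j < E → -(P.l j) = -(P.l 0) := by
    intro j hj; rw [hltop j hj]
  have hlbot' : ∀ j, j < P.M → P.M ≤ j + E → -(P.l j) = -(P.l (P.M - 1)) := by
    intro j h1 h2; rw [hlbot j h1 h2]
  -- width lower bound in the middle
  have hwidth : ∀ i, E ≤ i → i + E ≤ P.M → (E : ℤ) ≤ P.beta i := width_ge hN hNE hNM
  -- entrywise identification of the extreme entries
  have hr_top : ∀ j, j < δ → r j = P.r 0 := fun j hj =>
    entry_top_eq hσr har hEM hrtop hRc hj
  have hl_top : ∀ j, j < δ → l j = P.l 0 := by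
    intro j hj
    have h0 : -(l j) = -(P.l 0) :=
      entry_top_eq (r0 := fun j => -(P.l j)) (r := fun j => -(l j)) (σ := σl)
        hσl' hal hEM hltop' hLc hj
    linarith only [h0]
  have hr_bot : ∀ j, j < P.M → P.M ≤ j + δ → r j = P.r (P.M - 1) := fun j h1 h2 =>
    entry_bot_eq hσr har hEM hrbot hRc h1 h2
  have hl_bot : ∀ j, j < P.M → P.M ≤ j + δ → l j = P.l (P.M - 1) := by
    intro j h1 h2
    have h0 : -(l j) = -(P.l (P.M - 1)) :=
      entry_bot_eq (r0 := fun j => -(P.l j)) (r := fun j => -(l j)) (σ := σl)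
        hσl' hal hEM hlbot' hLc h1 h2
    linarith only [h0]
  -- total sums agree
  have htot_r : ∑ j ∈ Finset.range P.M, r j = ∑ j ∈ Finset.range P.M, P.r j :=
    rearr_sum hσr
  have htot_l : ∑ j ∈ Finset.range P.M, l j = ∑ j ∈ Finset.range P.M, P.l j := by
    have h0 : ∑ j ∈ Finset.range P.M, -(l j) = ∑ j ∈ Finset.range P.M, -(P.l j) :=
      rearr_sum (r0 := fun j => -(P.l j)) (r := fun j => -(l j)) (σ := σl) hσl'
    have h2 : ∑ j ∈ Finset.range P.M, -(l j) = -∑ j ∈ Finset.range P.M, l j :=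
      Finset.sum_neg_distrib _
    have h3 : ∑ j ∈ Finset.range P.M, -(P.l j) = -∑ j ∈ Finset.range P.M, P.l j :=
      Finset.sum_neg_distrib _
    rw [h2, h3] at h0
    linarith only [h0]
  have htot : ∑ j ∈ Finset.range P.M, (r j - l j)
      = ∑ j ∈ Finset.range P.M, (P.r j - P.l j) := by
    rw [Finset.sum_sub_distrib, Finset.sum_sub_distrib, htot_r, htot_l]
  constructor
  · -- Part 1
    intro i hiM hcase
    rcases hcase with hle | hge
    · -- i ≤ δ
      have hiδ : i ≤ δ := by exact_mod_cast hle
      show (P.dt : ℤ) + ∑ j ∈ Finset.range i, (r j - l j)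
          = (P.dt : ℤ) + ∑ j ∈ Finset.range i, (P.r j - P.l j)
      congr 1
      apply Finset.sum_congr rfl
      intro j hj
      rw [Finset.mem_range] at hj
      have hjδ : j < δ := by omega
      rw [hr_top j hjδ, hl_top j hjδ, hrtop j (by omega), hltop j (by omega)]
    · -- P.M - δ ≤ i
      have hiδ : P.M ≤ i + δ := by
        have h0 : (P.M : ℤ) ≤ (i : ℤ) + δ := by linarith only [hge]
        exact_mod_cast h0
      have hsplit1 : ∑ j ∈ Finset.range i, (r j - l j)
            + ∑ j ∈ Finset.Ico i P.M, (r j - l j)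
          = ∑ j ∈ Finset.range P.M, (r j - l j) :=
        Finset.sum_range_add_sum_Ico _ hiM
      have hsplit2 : ∑ j ∈ Finset.range i, (P.r j - P.l j)
            + ∑ j ∈ Finset.Ico i P.M, (P.r j - P.l j)
          = ∑ j ∈ Finset.range P.M, (P.r j - P.l j) :=
        Finset.sum_range_add_sum_Ico _ hiM
      have hIco : ∑ j ∈ Finset.Ico i P.M, (r j - l j)
          = ∑ j ∈ Finset.Ico i P.M, (P.r j - P.l j) := by
        apply Finset.sum_congr rfl
        intro j hj
        rw [Finset.mem_Ico] at hj
        have h1 : j < P.M := hj.2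
        have h2 : P.M ≤ j + δ := by omega
        rw [hr_bot j h1 h2, hl_bot j h1 h2, hrbot j h1 (by omega), hlbot j h1 (by omega)]
      show (P.dt : ℤ) + ∑ j ∈ Finset.range i, (r j - l j)
          = (P.dt : ℤ) + ∑ j ∈ Finset.range i, (P.r j - P.l j)
      linarith only [hsplit1, hsplit2, hIco, htot]
  · -- Part 2
    intro i hiM hlo hhi
    have hδi : δ < i := by exact_mod_cast hlo
    have hiMδ : i + δ < P.M := by
      have h0 : (i : ℤ) + δ < P.M := by linarith only [hhi]
      exact_mod_cast h0
    have hδcast : (δ : ℤ) ≤ (E : ℤ) := by exact_mod_cast hδE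
    rcases lt_or_ge i E with hiE | hEi
    · -- top region: δ < i < E
      set v := P.r 0 with hv
      set u := P.l 0 with hu
      set Dr := ∑ j ∈ Finset.range i, (v - r j) with hDr
      set Dl := ∑ j ∈ Finset.range i, (l j - u) with hDl
      have hDr0 : 0 ≤ Dr := by
        apply Finset.sum_nonneg
        intro j hj
        rw [Finset.mem_range] at hj
        have := rearr_le_max hσr har (j := j) (by omega)
        linarith only [this]
      have hDl0 : 0 ≤ Dl := by
        apply Finset.sum_nonneg
        intro j hj
        rw [Finset.mem_range] at hj
        have h0 : -(l j) ≤ -(P.l 0) :=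
          rearr_le_max (r0 := fun j => -(P.l j)) (r := fun j => -(l j)) (σ := σl)
            hσl' hal (j := j) (by omega)
        have h1 : u = P.l 0 := hu
        linarith only [h0, h1]
      have hexp : betaOf (P.dt : ℤ) l r i = (P.dt : ℤ) + i * (v - u) - Dr - Dl := by
        show (P.dt : ℤ) + ∑ j ∈ Finset.range i, (r j - l j) = _
        have hterm : ∀ j ∈ Finset.range i, r j - l j = (v - u) - (v - r j) - (l j - u) := by
          intro j _; ring
        rw [Finset.sum_congr rfl hterm, Finset.sum_sub_distrib, Finset.sum_sub_distrib,
          Finset.sum_const, Finset.card_range, nsmul_eq_mul]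
        ring
      have hDrB : (((E - i : ℕ) : ℤ) + 1) * Dr ≤ Rsum P.M r := by
        have h0 := refined_top_bound hσr har hEM hiE hrtop
        exact h0
      have hDlB : (((E - i : ℕ) : ℤ) + 1) * Dl ≤ Rsum P.M (fun j => -(l j)) := by
        have h0 := refined_top_bound (r0 := fun j => -(P.l j)) (r := fun j => -(l j))
          (σ := σl) hσl' hal hEM hiE hltop'
        have h1 : (((E - i : ℕ) : ℤ) + 1) * ∑ j ∈ Finset.range i, (-(P.l 0) - -(l j))
            ≤ Rsum P.M (fun j => -(l j)) := h0
        have heq : ∑ j ∈ Finset.range i, (-(P.l 0) - -(l j)) = Dl := by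
          apply Finset.sum_congr rfl
          intro j _
          have : u = P.l 0 := hu
          rw [this]; ring
        rwa [heq] at h1
      have key1 : (((E - i : ℕ) : ℤ) + 1) * (Dr + Dl) ≤ (E : ℤ) - δ := by
        have hh : (((E - i : ℕ) : ℤ) + 1) * (Dr + Dl)
            = (((E - i : ℕ) : ℤ) + 1) * Dr + (((E - i : ℕ) : ℤ) + 1) * Dl := by ring
        rw [hh]
        linarith only [hDrB, hDlB, hcsplit, hEc]
      have hbetaE : P.beta E = (P.dt : ℤ) + E * (v - u) := by
        rw [beta_eq_top]
        congr 1
        have hterm : ∀ j ∈ Finset.range E, P.r j - P.l j = v - u := by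
          intro j hj
          rw [Finset.mem_range] at hj
          rw [hrtop j hj, hltop j hj, hv, hu]
        rw [Finset.sum_congr rfl hterm, Finset.sum_const, Finset.card_range, nsmul_eq_mul]
      have key2 : (E : ℤ) - δ ≤ (((E - i : ℕ) : ℤ) + 1) * ((P.dt : ℤ) + i * (v - u) - δ) := by
        have hcast : ((E - i : ℕ) : ℤ) = (E : ℤ) - i := by omega
        have hdtn : (0 : ℤ) ≤ (P.dt : ℤ) := Int.natCast_nonneg _
        have hicast : (δ : ℤ) < (i : ℤ) := by exact_mod_cast hδi
        have hiEcast : (i : ℤ) < (E : ℤ) := by exact_mod_cast hiE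
        rw [hcast]
        apply arith_key_top _ _ _ _ _ hdtn (Int.natCast_nonneg δ) hicast hiEcast
        rcases le_or_gt 1 (v - u) with hd1 | hd0
        · exact Or.inl hd1
        · refine Or.inr ⟨by omega, ?_⟩
          have hA := hwidth E (le_refl E) h2EM
          rw [hbetaE] at hA
          linarith only [hA]
      have hdiv : Dr + Dl ≤ (P.dt : ℤ) + i * (v - u) - δ := by
        have hpos : (0 : ℤ) < ((E - i : ℕ) : ℤ) + 1 := by positivity
        exact le_of_mul_le_mul_left (le_trans key1 key2) hpos
      rw [hexp]
      linarith only [hdiv, hDr0, hDl0]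
    · rcases le_or_gt (i + E) P.M with hmid | hbot
      · -- middle region
        have h1 := prefix_sum_bound hσr har hiM
        have h2 : ∑ j ∈ Finset.range i, -(P.l j)
            ≤ ∑ j ∈ Finset.range i, -(l j) + Rsum P.M (fun j => -(l j)) :=
          prefix_sum_bound (r0 := fun j => -(P.l j)) (r := fun j => -(l j)) (σ := σl)
            hσl' hal hiM
        have h2' : ∑ j ∈ Finset.range i, l j
            ≤ ∑ j ∈ Finset.range i, P.l j + Rsum P.M (fun j => -(l j)) := by
          have ha' : ∑ j ∈ Finset.range i, -(P.l j) = -∑ j ∈ Finset.range i, P.l j :=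
            Finset.sum_neg_distrib _
          have hb' : ∑ j ∈ Finset.range i, -(l j) = -∑ j ∈ Finset.range i, l j :=
            Finset.sum_neg_distrib _
          rw [ha', hb'] at h2
          linarith
        have hA := hwidth i hEi hmid
        rw [beta_eq_top] at hA
        show (δ : ℤ) ≤ (P.dt : ℤ) + ∑ j ∈ Finset.range i, (r j - l j)
        rw [Finset.sum_sub_distrib]
        rw [Finset.sum_sub_distrib] at hA
        linarith only [h1, h2', hA, hcsplit, hEc]
      · -- bottom region: P.M - E < i < P.M - δ
        set w := P.r (P.M - 1) with hw
        set wl := P.l (P.M - 1) with hwl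
        set Drt := ∑ j ∈ Finset.Ico i P.M, (r j - w) with hDrt
        set Dlt := ∑ j ∈ Finset.Ico i P.M, (wl - l j) with hDlt
        have hDr0 : 0 ≤ Drt := by
          apply Finset.sum_nonneg
          intro j hj
          rw [Finset.mem_Ico] at hj
          have := rearr_min_le hσr har (j := j) hj.2
          linarith only [this]
        have hDl0 : 0 ≤ Dlt := by
          apply Finset.sum_nonneg
          intro j hj
          rw [Finset.mem_Ico] at hj
          have h0 : -(P.l (P.M - 1)) ≤ -(l j) :=
            rearr_min_le (r0 := fun j => -(P.l j)) (r := fun j => -(l j)) (σ := σl)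
              hσl' hal (j := j) hj.2
          have h1 : wl = P.l (P.M - 1) := hwl
          linarith only [h0, h1]
        have hexp : betaOf (P.dt : ℤ) l r i
            = (P.db : ℤ) - ((P.M : ℤ) - i) * (w - wl) - Drt - Dlt := by
          have hsplit1 : ∑ j ∈ Finset.range i, (r j - l j)
                + ∑ j ∈ Finset.Ico i P.M, (r j - l j)
              = ∑ j ∈ Finset.range P.M, (r j - l j) :=
            Finset.sum_range_add_sum_Ico _ hiM
          have hterm : ∀ j ∈ Finset.Ico i P.M,
              r j - l j = (w - wl) + (r j - w) + (wl - l j) := by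
            intro j _; ring
          have hIcoEq : ∑ j ∈ Finset.Ico i P.M, (r j - l j)
              = ((P.M : ℤ) - i) * (w - wl) + Drt + Dlt := by
            rw [Finset.sum_congr rfl hterm, Finset.sum_add_distrib, Finset.sum_add_distrib,
              Finset.sum_const, Nat.card_Ico, nsmul_eq_mul]
            have hcc : ((P.M - i : ℕ) : ℤ) = (P.M : ℤ) - i := by omega
            rw [hcc]
          have hclose := P.width_closes
          show (P.dt : ℤ) + ∑ j ∈ Finset.range i, (r j - l j) = _
          linarith only [hsplit1, hIcoEq, htot, hclose]
        have hDrB : (((i + E - P.M : ℕ) : ℤ) + 1) * Drt ≤ Rsum P.M r :=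
          refined_bot_bound hσr har hEM (by omega : i ≤ P.M) hbot hrbot
        have hDlB : (((i + E - P.M : ℕ) : ℤ) + 1) * Dlt ≤ Rsum P.M (fun j => -(l j)) := by
          have h0 := refined_bot_bound (r0 := fun j => -(P.l j)) (r := fun j => -(l j))
            (σ := σl) hσl' hal hEM (by omega : i ≤ P.M) hbot hlbot'
          have h1 : (((i + E - P.M : ℕ) : ℤ) + 1)
                * ∑ j ∈ Finset.Ico i P.M, (-(l j) - -(P.l (P.M - 1)))
              ≤ Rsum P.M (fun j => -(l j)) := h0
          have heq : ∑ j ∈ Finset.Ico i P.M, (-(l j) - -(P.l (P.M - 1))) = Dlt := by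
            apply Finset.sum_congr rfl
            intro j _
            have h2 : wl = P.l (P.M - 1) := hwl
            rw [h2]; ring
          rwa [heq] at h1
        have key1 : (((i + E - P.M : ℕ) : ℤ) + 1) * (Drt + Dlt) ≤ (E : ℤ) - δ := by
          have hh : (((i + E - P.M : ℕ) : ℤ) + 1) * (Drt + Dlt)
              = (((i + E - P.M : ℕ) : ℤ) + 1) * Drt
                + (((i + E - P.M : ℕ) : ℤ) + 1) * Dlt := by ring
          rw [hh]
          linarith only [hDrB, hDlB, hcsplit, hEc]
        have hbetaME : P.beta (P.M - E) = (P.db : ℤ) - (E : ℤ) * (w - wl) := by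
          rw [beta_eq_bot P (by omega : P.M - E ≤ P.M)]
          congr 1
          have hterm : ∀ j ∈ Finset.Ico (P.M - E) P.M, P.r j - P.l j = w - wl := by
            intro j hj
            rw [Finset.mem_Ico] at hj
            rw [hrbot j hj.2 (by omega), hlbot j hj.2 (by omega), hw, hwl]
          rw [Finset.sum_congr rfl hterm, Finset.sum_const, Nat.card_Ico, nsmul_eq_mul]
          have hc2 : ((P.M - (P.M - E) : ℕ) : ℤ) = (E : ℤ) := by omega
          rw [hc2]
        have key2 : (E : ℤ) - δ ≤ (((i + E - P.M : ℕ) : ℤ) + 1)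
            * ((P.db : ℤ) - ((P.M : ℤ) - i) * (w - wl) - δ) := by
          have hcast : ((i + E - P.M : ℕ) : ℤ) = (i : ℤ) + E - P.M := by omega
          have hdbn : (0 : ℤ) ≤ (P.db : ℤ) := Int.natCast_nonneg _
          have hi1 : (δ : ℤ) < (P.M : ℤ) - i := by
            have h0 : ((i + δ : ℕ) : ℤ) < (P.M : ℤ) := by exact_mod_cast hiMδ
            push_cast at h0
            linarith only [h0]
          have hi2 : (P.M : ℤ) - i < (E : ℤ) := by
            have h0 : (P.M : ℤ) < ((i + E : ℕ) : ℤ) := by exact_mod_cast hbot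
            push_cast at h0
            linarith only [h0]
          have hcast2 : ((i + E - P.M : ℕ) : ℤ) + 1 = ((E : ℤ) - ((P.M : ℤ) - i)) + 1 := by
            omega
          rw [hcast2]
          apply arith_key_bot _ _ _ _ _ hdbn (Int.natCast_nonneg δ) hi1 hi2
          rcases le_or_gt (w - wl) (-1) with hd1 | hd0
          · exact Or.inl hd1
          · refine Or.inr ⟨by omega, ?_⟩
            have hA := hwidth (P.M - E) (by omega) (by omega)
            rw [hbetaME] at hA
            linarith only [hA]
        have hdiv : Drt + Dlt ≤ (P.db : ℤ) - ((P.M : ℤ) - i) * (w - wl) - δ := by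
          have hpos : (0 : ℤ) < ((i + E - P.M : ℕ) : ℤ) + 1 := by positivity
          exact le_of_mul_le_mul_left (le_trans key1 key2) hpos
        rw [hexp]
        linarith only [hdiv, hDr0, hDl0]
end

section
/- Let Δ be an h-transverse polygon of height M having internal vertices, let N be the level of the uppermost internal vertex of Δ, and let (l,r) be a reordering of the left and right direction sequences (l_0, r_0) of Δ. Write β = β(d^t, r−l) = (β_0,…,β_M) and let β(Δ) = (β_0(Δ),…,β_M(Δ)) be the width sequence of Δ. If β_i(Δ) − β_i = n > 0 for some index i ≤ N, then δ(l,r) ≥ n(N+1−i). -/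
open scoped Classical


private lemma key_bound (M N i : ℕ) (r0 r : ℕ → ℤ) (hNM : N < M) (hiN : i ≤ N)
    (hconst : ∀ k, k < N → r0 k = r0 0)
    (hmax : ∀ k, k < M → r0 k ≤ r0 0)
    (hre : IsRearrangement M r0 r) :
    ((N : ℤ) + 1 - (i : ℤ)) * (∑ j ∈ Finset.range i, (r0 0 - r j)) ≤
      ∑ p ∈ (Finset.range M ×ˢ Finset.range M).filter
          (fun p => p.1 < p.2 ∧ r p.1 < r p.2), (r p.2 - r p.1) := by
  obtain ⟨σ, hσ⟩ := hre
  set c := r0 0 with hc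
  have hrle : ∀ k, k < M → r k ≤ c := by
    intro k hk
    have h := hσ ⟨k, hk⟩
    simp only at h
    rw [h]
    exact hmax _ (σ ⟨k, hk⟩).isLt
  set S : Finset ℕ := (Finset.range M).filter (fun k => r k = c) with hSdef
  have hcardS : N ≤ S.card := by
    have h : (Finset.range N).card ≤ S.card := by
      apply Finset.card_le_card_of_injOn
        (fun k => if h : k < M then ((σ.symm ⟨k, h⟩ : Fin M) : ℕ) else 0)
      · intro k hk
        have hkN : k < N := Finset.mem_range.mp hk
        have hkM : k < M := lt_trans hkN hNM
        simp only [dif_pos hkM, hSdef, Finset.mem_coe, Finset.mem_filter, Finset.mem_range]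
        refine ⟨(σ.symm ⟨k, hkM⟩).isLt, ?_⟩
        have h2 := hσ (σ.symm ⟨k, hkM⟩)
        rw [Equiv.apply_symm_apply] at h2
        rw [h2]
        exact hconst k hkN
      · intro a ha b hb hab
        have haM : a < M := lt_trans (Finset.mem_range.mp ha) hNM
        have hbM : b < M := lt_trans (Finset.mem_range.mp hb) hNM
        simp only [dif_pos haM, dif_pos hbM] at hab
        have h1 : σ.symm ⟨a, haM⟩ = σ.symm ⟨b, hbM⟩ := Fin.ext hab
        have h2 := σ.symm.injective h1
        exact congrArg Fin.val h2
    simpa using h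
  -- for each j, the set of "reversal partners" of j
  set K : ℕ → Finset ℕ :=
    fun j => (Finset.range M).filter (fun k => j < k ∧ r j < r k ∧ r k = c) with hKdef
  have hcardK : ∀ j, j < i → r j < c → ((N : ℤ) + 1 - (i : ℤ)) ≤ ((K j).card : ℤ) := by
    intro j hji hrj
    have hsplit := Finset.card_filter_add_card_filter_not
      (s := S) (p := fun k => k ≤ j)
    have h1 : (S.filter (fun k => k ≤ j)).card ≤ j := by
      have hsub : S.filter (fun k => k ≤ j) ⊆ Finset.range j := by
        intro k hk
        simp only [Finset.mem_filter, hSdef, Finset.mem_range] at hk ⊢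
        rcases hk with ⟨⟨hkM, hkc⟩, hkj⟩
        rcases lt_or_eq_of_le hkj with h | h
        · exact h
        · exfalso; rw [h] at hkc; exact absurd hkc (ne_of_lt hrj)
      simpa using Finset.card_le_card hsub
    have h2 : (S.filter (fun k => ¬ k ≤ j)).card ≤ (K j).card := by
      apply Finset.card_le_card
      intro k hk
      simp only [Finset.mem_filter, hSdef, Finset.mem_range, not_le, hKdef] at hk ⊢
      rcases hk with ⟨⟨hkM, hkc⟩, hjk⟩
      exact ⟨hkM, hjk, by rw [hkc]; exact hrj, hkc⟩
    omega
  have hsub : ∀ j ∈ Finset.range i, ((N : ℤ) + 1 - (i : ℤ)) * (c - r j) ≤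
      ∑ k ∈ K j, (r k - r j) := by
    intro j hj
    have hji : j < i := Finset.mem_range.mp hj
    have hjM : j < M := lt_of_lt_of_le hji (le_trans hiN (le_of_lt hNM))
    rcases lt_or_eq_of_le (hrle j hjM) with hrj | hrj
    · have hsum : ∑ k ∈ K j, (r k - r j) = ((K j).card : ℤ) * (c - r j) := by
        rw [Finset.sum_congr rfl (fun k hk => ?_), Finset.sum_const, nsmul_eq_mul]
        simp only [hKdef, Finset.mem_filter] at hk
        rw [hk.2.2.2]
      rw [hsum]
      exact mul_le_mul_of_nonneg_right (hcardK j hji hrj) (by linarith)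
    · have hK : K j = ∅ := by
        apply Finset.filter_false_of_mem
        rintro k hk ⟨h1, h2, h3⟩
        rw [h3, ← hrj] at h2
        exact lt_irrefl _ h2
      rw [hK, hrj]
      simp
  -- assemble: the double sum equals a sum over a sub-filter of the reversal set
  set T : Finset (ℕ × ℕ) := (Finset.range i ×ˢ Finset.range M).filter
    (fun p => p.1 < p.2 ∧ r p.1 < r p.2 ∧ r p.2 = c) with hTdef
  have hTsum : ∑ p ∈ T, (r p.2 - r p.1) = ∑ j ∈ Finset.range i, ∑ k ∈ K j, (r k - r j) := by
    rw [hTdef, Finset.sum_filter, Finset.sum_product]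
    refine Finset.sum_congr rfl fun j _ => ?_
    rw [Finset.sum_filter]
  have hTF : T ⊆ (Finset.range M ×ˢ Finset.range M).filter
      (fun p => p.1 < p.2 ∧ r p.1 < r p.2) := by
    intro p hp
    simp only [hTdef, Finset.mem_filter, Finset.mem_product, Finset.mem_range] at hp ⊢
    exact ⟨⟨lt_of_lt_of_le hp.1.1 (le_trans hiN (le_of_lt hNM)), hp.1.2⟩, hp.2.1, hp.2.2.1⟩
  calc ((N : ℤ) + 1 - (i : ℤ)) * (∑ j ∈ Finset.range i, (c - r j))
      = ∑ j ∈ Finset.range i, ((N : ℤ) + 1 - (i : ℤ)) * (c - r j) := Finset.mul_sum _ _ _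
    _ ≤ ∑ j ∈ Finset.range i, ∑ k ∈ K j, (r k - r j) := Finset.sum_le_sum hsub
    _ = ∑ p ∈ T, (r p.2 - r p.1) := hTsum.symm
    _ ≤ _ := by
        apply Finset.sum_le_sum_of_subset_of_nonneg hTF
        intro p hp _
        simp only [Finset.mem_filter] at hp
        linarith [hp.2.2]

/-- let `Δ` be an h-transverse polygon having internal vertices, `N` the level
of the uppermost internal vertex, and `(l, r)` a reordering of `(l_0, r_0)`.  If
`β_i(Δ) − β_i = n > 0` for some `i ≤ N`, then `δ(l, r) ≥ n (N + 1 − i)`. -/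
theorem cogenus_lower_bound_of_beta_drop (P : HTransverse) (N : ℕ)
    (hN : P.IsInternalVertex N) (hmin : ∀ N', P.IsInternalVertex N' → N ≤ N')
    (l r : ℕ → ℤ) (hl : IsRearrangement P.M P.l l) (hr : IsRearrangement P.M P.r r)
    (i : ℕ) (hi : i ≤ N) (n : ℤ) (hn : 0 < n)
    (hdrop : P.beta i - betaOf (P.dt : ℤ) l r i = n) :
    n * ((N : ℤ) + 1 - (i : ℤ)) ≤ cogenusLR P.M l r := by
  have hNM : N < P.M := by rcases hN with h | h <;> exact h.2.1
  have hconst_r : ∀ k, k < N → P.r k = P.r 0 := by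
    intro k hk
    induction k with
    | zero => rfl
    | succ m ih =>
      rw [← ih (lt_trans (Nat.lt_succ_self m) hk)]
      by_contra hne
      have hv : P.IsInternalVertex (m + 1) :=
        Or.inl ⟨Nat.succ_pos m, lt_trans hk hNM, by
          simpa using fun h => hne h.symm⟩
      have := hmin _ hv
      omega
  have hconst_l : ∀ k, k < N → P.l k = P.l 0 := by
    intro k hk
    induction k with
    | zero => rfl
    | succ m ih =>
      rw [← ih (lt_trans (Nat.lt_succ_self m) hk)]
      by_contra hne
      have hv : P.IsInternalVertex (m + 1) :=
        Or.inr ⟨Nat.succ_pos m, lt_trans hk hNM, by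
          simpa using fun h => hne h.symm⟩
      have := hmin _ hv
      omega
  -- key bound for r
  have keyr := key_bound P.M N i P.r r hNM hi hconst_r
    (fun k hk => P.r_antitone (Nat.zero_le k) hk) hr
  -- key bound for -l
  have hl' : IsRearrangement P.M (fun k => -P.l k) (fun k => -l k) := by
    obtain ⟨σ, hσ⟩ := hl
    exact ⟨σ, fun i => by simp [hσ i]⟩
  have keyl := key_bound P.M N i (fun k => -P.l k) (fun k => -l k) hNM hi
    (fun k hk => by simp [hconst_l k hk])
    (fun k hk => by simpa using P.l_monotone (Nat.zero_le k) hk) hl'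
  -- rewrite the conclusion of keyl into the l-part of the cogenus
  have hset : ((Finset.range P.M ×ˢ Finset.range P.M).filter
        (fun p => p.1 < p.2 ∧ (fun k => -l k) p.1 < (fun k => -l k) p.2)) =
      ((Finset.range P.M ×ˢ Finset.range P.M).filter
        (fun p => p.1 < p.2 ∧ l p.2 < l p.1)) := by
    ext p
    simp only [Finset.mem_filter]
    constructor <;> rintro ⟨h1, h2, h3⟩ <;> exact ⟨h1, h2, by omega⟩
  have keyl2 : ((N : ℤ) + 1 - (i : ℤ)) * (∑ j ∈ Finset.range i, (l j - P.l 0)) ≤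
      ∑ p ∈ (Finset.range P.M ×ˢ Finset.range P.M).filter
        (fun p => p.1 < p.2 ∧ l p.2 < l p.1), (l p.1 - l p.2) := by
    have e1 : (∑ j ∈ Finset.range i, ((fun k => -P.l k) 0 - (fun k => -l k) j)) =
        ∑ j ∈ Finset.range i, (l j - P.l 0) := by
      refine Finset.sum_congr rfl fun j _ => ?_; ring
    have e2 : (∑ p ∈ (Finset.range P.M ×ˢ Finset.range P.M).filter
          (fun p => p.1 < p.2 ∧ (fun k => -l k) p.1 < (fun k => -l k) p.2),
          ((fun k => -l k) p.2 - (fun k => -l k) p.1)) =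
        ∑ p ∈ (Finset.range P.M ×ˢ Finset.range P.M).filter
          (fun p => p.1 < p.2 ∧ l p.2 < l p.1), (l p.1 - l p.2) := by
      rw [hset]
      refine Finset.sum_congr rfl fun p _ => ?_; ring
    rw [← e1, ← e2]
    exact keyl
  -- decompose the drop n
  have hAB : (∑ j ∈ Finset.range i, (P.r 0 - r j)) +
      (∑ j ∈ Finset.range i, (l j - P.l 0)) = n := by
    have h1 : ∀ j ∈ Finset.range i, (P.r 0 - r j) + (l j - P.l 0) =
        (P.r j - P.l j) - (r j - l j) := by
      intro j hj
      have hjN : j < N := lt_of_lt_of_le (Finset.mem_range.mp hj) hi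
      rw [hconst_r j hjN, hconst_l j hjN]; ring
    calc (∑ j ∈ Finset.range i, (P.r 0 - r j)) + (∑ j ∈ Finset.range i, (l j - P.l 0))
        = ∑ j ∈ Finset.range i, ((P.r 0 - r j) + (l j - P.l 0)) :=
          Finset.sum_add_distrib.symm
      _ = ∑ j ∈ Finset.range i, ((P.r j - P.l j) - (r j - l j)) :=
          Finset.sum_congr rfl h1
      _ = n := by
          rw [← hdrop]
          simp only [HTransverse.beta, betaOf, Finset.sum_sub_distrib]
          ring
  calc n * ((N : ℤ) + 1 - (i : ℤ))
      = ((N : ℤ) + 1 - (i : ℤ)) * (∑ j ∈ Finset.range i, (P.r 0 - r j)) +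
        ((N : ℤ) + 1 - (i : ℤ)) * (∑ j ∈ Finset.range i, (l j - P.l 0)) := by
          rw [← mul_add, hAB]; ring
    _ ≤ cogenusLR P.M l r := add_le_add keyr keyl2
end

section
/- Fix integers x > y with d = x − y, positive integers a and b, and let r_0 be the integer sequence consisting of a copies of x followed by b copies of y. Then for every integer m with 0 ≤ m ≤ min(a,b), the number of rearrangements r of r_0 satisfying ∑_{(i,j)∈Rev(r)} (r_j − r_i) = d·m equals p(m), the number of partitions of m. -/
open scoped Classical

/-- The quantity `∑_{(i,j) ∈ Rev(s)} (s_j − s_i)`, where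
`Rev(s) = {(i,j) : i < j, s_i < s_j}` is the reversal set of the finite sequence `s`. -/
def revSum {n : ℕ} (s : Fin n → ℤ) : ℤ :=
  ∑ p ∈ Finset.univ.filter (fun p : Fin n × Fin n => p.1 < p.2 ∧ s p.1 < s p.2),
    (s p.2 - s p.1)

private lemma card_filter_lt_fin {n : ℕ} (i : Fin n) :
    (Finset.univ.filter fun j : Fin n => j < i).card = (i : ℕ) := by
  have : (Finset.univ.filter fun j : Fin n => j < i) = Finset.Iio i := by
    ext j; simp [Finset.mem_Iio]
  rw [this, Fin.card_Iio]

private lemma strictMono_add_le {n : ℕ} {f : Fin n → ℕ} (hf : StrictMono f) :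
    ∀ t (j k : Fin n), (k : ℕ) = (j : ℕ) + t → f j + t ≤ f k := by
  intro t
  induction t with
  | zero =>
    intro j k h
    have : j = k := Fin.ext (by omega)
    subst this; omega
  | succ t ih =>
    intro j k h
    have hk : (j : ℕ) + t < n := by omega
    have h1 := ih j ⟨(j : ℕ) + t, hk⟩ rfl
    have h2 : f ⟨(j : ℕ) + t, hk⟩ < f k := hf (by simp [Fin.lt_def]; omega)
    omega

private lemma self_le_strictMono {n : ℕ} {f : Fin n → ℕ} (hf : StrictMono f) (j : Fin n) :
    (j : ℕ) ≤ f j := by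
  have hpos : 0 < n := Nat.lt_of_le_of_lt (Nat.zero_le _) j.2
  have := strictMono_add_le hf (j : ℕ) ⟨0, hpos⟩ j (by simp)
  omega

private lemma image_orderEmbOfFin {n a : ℕ} (A : Finset (Fin n)) (hA : A.card = a) :
    Finset.image (⇑(A.orderEmbOfFin hA)) Finset.univ = A := by
  apply Finset.coe_injective
  rw [Finset.coe_image, Finset.coe_univ, Set.image_univ, Finset.range_orderEmbOfFin]

private lemma card_pairs (a b : ℕ) (A : Finset (Fin (a + b))) (hA : A.card = a) :
    (Finset.univ.filter fun p : Fin (a + b) × Fin (a + b) =>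
        p.1 < p.2 ∧ p.1 ∉ A ∧ p.2 ∈ A).card
      = ∑ j : Fin a, ((A.orderEmbOfFin hA j : ℕ) - (j : ℕ)) := by
  classical
  set e := A.orderEmbOfFin hA with he
  have hmem : ∀ i, i ∈ A ↔ ∃ k : Fin a, e k = i := by
    intro i
    constructor
    · intro hi
      have : i ∈ Set.range ⇑e := by rw [Finset.range_orderEmbOfFin]; exact hi
      exact this
    · rintro ⟨k, rfl⟩; exact Finset.orderEmbOfFin_mem A hA k
  -- fiberwise over the second coordinate
  rw [Finset.card_eq_sum_card_fiberwise
      (f := fun p : Fin (a + b) × Fin (a + b) => p.2) (t := A)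
      (fun p hp => (Finset.mem_filter.1 hp).2.2.2)]
  -- reindex the sum over A via e
  have himg := image_orderEmbOfFin A hA
  have hre : ∀ F : Fin (a + b) → ℕ, ∑ i ∈ A, F i = ∑ j : Fin a, F (e j) := by
    intro F
    rw [← himg, Finset.sum_image (fun i _ j _ h => e.injective h)]
  rw [hre]
  apply Finset.sum_congr rfl
  intro j _
  -- fiber card equals number of non-elements below e j
  have hfiber :
      ((Finset.univ.filter fun p : Fin (a + b) × Fin (a + b) =>
          p.1 < p.2 ∧ p.1 ∉ A ∧ p.2 ∈ A).filter fun p => p.2 = e j).card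
        = (Finset.univ.filter fun i : Fin (a + b) => i < e j ∧ i ∉ A).card := by
    refine Finset.card_bij' (fun p _ => p.1) (fun i _ => (i, e j)) ?_ ?_ ?_ ?_
    · intro p hp
      simp only [Finset.mem_filter, Finset.mem_univ, true_and] at hp ⊢
      obtain ⟨⟨h1, h2, _⟩, h4⟩ := hp
      exact ⟨h4 ▸ h1, h2⟩
    · intro i hi
      simp only [Finset.mem_filter, Finset.mem_univ, true_and] at hi ⊢
      exact ⟨⟨hi.1, hi.2, Finset.orderEmbOfFin_mem A hA j⟩, trivial⟩
    · intro p hp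
      simp only [Finset.mem_filter] at hp
      exact Prod.ext rfl hp.2.symm
    · intro i hi; rfl
  rw [hfiber]
  -- count: all below e j, minus those in A below e j
  have h1 : (Finset.univ.filter fun i : Fin (a + b) => i < e j).card = (e j : ℕ) :=
    card_filter_lt_fin _
  have h2 : (Finset.univ.filter fun i : Fin (a + b) => i < e j ∧ i ∈ A).card = (j : ℕ) := by
    have himg2 : (Finset.univ.filter fun i : Fin (a + b) => i < e j ∧ i ∈ A)
        = Finset.image (⇑e) (Finset.univ.filter fun k : Fin a => k < j) := by
      ext i
      simp only [Finset.mem_filter, Finset.mem_univ, true_and, Finset.mem_image]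
      constructor
      · rintro ⟨hlt, hiA⟩
        obtain ⟨k, rfl⟩ := (hmem i).1 hiA
        exact ⟨k, e.strictMono.lt_iff_lt.1 hlt, rfl⟩
      · rintro ⟨k, hk, rfl⟩
        exact ⟨e.strictMono hk, (hmem _).2 ⟨k, rfl⟩⟩
    rw [himg2, Finset.card_image_of_injective _ e.injective, card_filter_lt_fin]
  have h3 : (Finset.univ.filter fun i : Fin (a + b) => i < e j ∧ i ∈ A).card
      + (Finset.univ.filter fun i : Fin (a + b) => i < e j ∧ i ∉ A).card
      = (Finset.univ.filter fun i : Fin (a + b) => i < e j).card := by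
    rw [← Finset.filter_filter, ← Finset.filter_filter]
    exact Finset.card_filter_add_card_filter_not (fun i => i ∈ A)
  rw [h1] at h3
  rw [← h2]
  exact eq_tsub_of_add_eq (by rw [add_comm]; exact h3)

private lemma revSum_indicator (a b : ℕ) (x y : ℤ) (hxy : y < x)
    (A : Finset (Fin (a + b))) (hA : A.card = a) :
    revSum (fun i => if i ∈ A then x else y)
      = (x - y) * ((∑ j : Fin a, ((A.orderEmbOfFin hA j : ℕ) - (j : ℕ)) : ℕ) : ℤ) := by
  classical
  have hfilt : (Finset.univ.filter fun p : Fin (a + b) × Fin (a + b) =>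
        p.1 < p.2 ∧ (fun i => if i ∈ A then x else y) p.1 < (fun i => if i ∈ A then x else y) p.2)
      = Finset.univ.filter fun p : Fin (a + b) × Fin (a + b) =>
        p.1 < p.2 ∧ p.1 ∉ A ∧ p.2 ∈ A := by
    ext p
    simp only [Finset.mem_filter, Finset.mem_univ, true_and]
    by_cases h1 : p.1 ∈ A <;> by_cases h2 : p.2 ∈ A <;> simp [h1, h2] <;> omega
  rw [revSum, hfilt]
  have hterm : ∀ p ∈ Finset.univ.filter fun p : Fin (a + b) × Fin (a + b) =>
      p.1 < p.2 ∧ p.1 ∉ A ∧ p.2 ∈ A,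
      ((fun i => if i ∈ A then x else y) p.2 - (fun i => if i ∈ A then x else y) p.1) = x - y := by
    intro p hp
    obtain ⟨-, h1, h2⟩ := (Finset.mem_filter.1 hp).2
    simp [h1, h2]
  rw [Finset.sum_congr rfl hterm, Finset.sum_const, card_pairs a b A hA, nsmul_eq_mul]
  exact mul_comm _ _

private lemma perm_iff (a b : ℕ) (hb : 0 < b) (x y : ℤ) (hne : x ≠ y) (r : Fin (a + b) → ℤ) :
    (∃ σ : Equiv.Perm (Fin (a + b)),
        ∀ i, r i = (fun i : Fin (a + b) => if (i : ℕ) < a then x else y) (σ i)) ↔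
      ((∀ i, r i = x ∨ r i = y) ∧ (Finset.univ.filter fun i => r i = x).card = a) := by
  classical
  have hga : (Finset.univ.filter fun i : Fin (a + b) => (i : ℕ) < a).card = a := by
    have h := card_filter_lt_fin (⟨a, by omega⟩ : Fin (a + b))
    simp only [Fin.lt_def] at h
    exact h
  constructor
  · rintro ⟨σ, hσ⟩
    constructor
    · intro i
      rw [hσ i]
      by_cases h : ((σ i : ℕ)) < a <;> simp [h]
    · have hset : (Finset.univ.filter fun i => r i = x)
          = Finset.univ.filter fun i => ((σ i : ℕ)) < a := by
        ext i
        simp only [Finset.mem_filter, Finset.mem_univ, true_and, hσ i]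
        by_cases h : ((σ i : ℕ)) < a <;> simp [h, hne, Ne.symm hne]
      have hcongr : (Finset.univ.filter fun i => ((σ i : ℕ)) < a).card
          = (Finset.univ.filter fun i : Fin (a + b) => (i : ℕ) < a).card := by
        apply Finset.card_equiv σ
        intro i
        simp
      rw [hset, hcongr, hga]
  · rintro ⟨hval, hcard⟩
    have hc1 : Fintype.card {i : Fin (a + b) // r i = x}
        = Fintype.card {i : Fin (a + b) // (i : ℕ) < a} := by
      rw [Fintype.card_subtype, Fintype.card_subtype, hcard, hga]
    have hc2 : Fintype.card {i : Fin (a + b) // ¬ r i = x}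
        = Fintype.card {i : Fin (a + b) // ¬ (i : ℕ) < a} := by
      rw [Fintype.card_subtype_compl, Fintype.card_subtype_compl, hc1]
    let e := Fintype.equivOfCardEq hc1
    let f := Fintype.equivOfCardEq hc2
    refine ⟨Equiv.subtypeCongr e f, fun i => ?_⟩
    by_cases h : r i = x
    · have hσ : Equiv.subtypeCongr e f i = ↑(e ⟨i, h⟩) := by
        simp [Equiv.subtypeCongr, h]
      rw [hσ]
      show r i = if ((e ⟨i, h⟩ : { i : Fin (a + b) // (i : ℕ) < a }) : Fin (a + b)) < a then x else y
      rw [if_pos (e ⟨i, h⟩).2, h]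
    · have hσ : Equiv.subtypeCongr e f i = ↑(f ⟨i, h⟩) := by
        simp [Equiv.subtypeCongr, h]
      rw [hσ]
      have hq := (f ⟨i, h⟩).2
      have hry : r i = y := (hval i).resolve_left h
      show r i = if ((f ⟨i, h⟩ : { i : Fin (a + b) // ¬ (i : ℕ) < a }) : Fin (a + b)) < a then x else y
      rw [if_neg hq, hry]

/-- fix integers `x > y` with `d = x − y`, positive integers `a`, `b`, and let
`r_0` consist of `a` copies of `x` followed by `b` copies of `y`.  Then for every
`0 ≤ m ≤ min(a, b)`, the number of rearrangements `r` of `r_0` (counted as distinct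
sequences) satisfying `∑_{(i,j) ∈ Rev(r)} (r_j − r_i) = d·m` equals `p(m)`, the number of
partitions of `m`. -/
theorem count_rearrangements_eq_partitions (x y : ℤ) (hxy : y < x) (d : ℤ) (hd : d = x - y)
    (a b : ℕ) (ha : 0 < a) (hb : 0 < b) (m : ℕ) (hm : m ≤ min a b) :
    Set.ncard {r : Fin (a + b) → ℤ |
        (∃ σ : Equiv.Perm (Fin (a + b)),
          ∀ i, r i = (fun i : Fin (a + b) => if (i : ℕ) < a then x else y) (σ i)) ∧
        revSum r = d * (m : ℤ)}
      = Fintype.card (Nat.Partition m) := by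
  classical
  have hne : x ≠ y := ne_of_gt hxy
  have hd0 : d ≠ 0 := by rw [hd]; exact sub_ne_zero.2 hne
  have hma : m ≤ a := le_trans hm (min_le_left _ _)
  have hmb : m ≤ b := le_trans hm (min_le_right _ _)
  -- the padded sorted list of a partition
  set L : Nat.Partition m → List ℕ :=
    fun p => List.replicate (a - Multiset.card p.parts) 0 ++ p.parts.sort (· ≤ ·) with hL
  have hkle : ∀ p : Nat.Partition m, Multiset.card p.parts ≤ a := by
    intro p
    calc Multiset.card p.parts = Multiset.card p.parts • 1 := by simp
    _ ≤ p.parts.sum := Multiset.card_nsmul_le_sum (fun z hz => p.parts_pos hz)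
    _ = m := p.parts_sum
    _ ≤ a := hma
  have hlen : ∀ p, (L p).length = a := by
    intro p
    simp only [hL, List.length_append, List.length_replicate, Multiset.length_sort]
    have := hkle p
    omega
  have hentry : ∀ p, ∀ z ∈ L p, z ≤ b := by
    intro p z hz
    rcases List.mem_append.1 hz with h | h
    · rw [List.eq_of_mem_replicate h]; omega
    · have hzp : z ∈ p.parts := (Multiset.mem_sort _).1 h
      calc z ≤ p.parts.sum := Multiset.single_le_sum (fun _ _ => Nat.zero_le _) z hzp
      _ = m := p.parts_sum
      _ ≤ b := hmb
  have hLsum : ∀ p, (L p).sum = m := by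
    intro p
    simp only [hL, List.sum_append, List.sum_replicate, smul_zero, zero_add]
    rw [← Multiset.sum_coe, Multiset.sort_eq, p.parts_sum]
  have hLsorted : ∀ p, (L p).Pairwise (· ≤ ·) := by
    intro p
    rw [hL]
    simp only [List.pairwise_append]
    refine ⟨(List.pairwise_replicate).2 (Or.inr (le_refl 0)), Multiset.pairwise_sort _ _, ?_⟩
    intro u hu v _
    rw [List.eq_of_mem_replicate hu]
    exact Nat.zero_le _
  -- the increasing padded part-function of a partition
  set c : Nat.Partition m → Fin a → ℕ := fun p j => (L p).getD (j : ℕ) 0 with hc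
  have hcget : ∀ p (j : Fin a), c p j = (L p)[(j : ℕ)]'(by rw [hlen p]; exact j.2) := by
    intro p j
    exact List.getD_eq_getElem _ _ _
  have hcmono : ∀ p, Monotone (c p) := by
    intro p
    intro j k hjk
    rw [hcget, hcget]
    rcases eq_or_lt_of_le hjk with h | h
    · subst h; exact le_refl _
    · have hs := hLsorted p
      rw [List.pairwise_iff_getElem] at hs
      exact hs _ _ _ _ h
  have hcbound : ∀ p (j : Fin a), c p j ≤ b := by
    intro p j
    rw [hcget]
    exact hentry p _ (List.getElem_mem _)
  have hLofFn : ∀ p, L p = List.ofFn (c p) := by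
    intro p
    apply List.ext_getElem
    · rw [hlen, List.length_ofFn]
    · intro i h1 h2
      rw [List.getElem_ofFn]
      rw [List.length_ofFn] at h2
      rw [hcget]
  -- the strictly monotone position function
  have hbound : ∀ p (j : Fin a), c p j + (j : ℕ) < a + b := by
    intro p j
    have := hcbound p j
    have := j.2
    omega
  set E : Nat.Partition m → Fin a → Fin (a + b) :=
    fun p j => ⟨c p j + (j : ℕ), hbound p j⟩ with hE
  have hEmono : ∀ p, StrictMono (E p) := by
    intro p j k hjk
    have h1 : c p j ≤ c p k := hcmono p (le_of_lt hjk)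
    have h2 : (j : ℕ) < (k : ℕ) := hjk
    simp only [hE, Fin.mk_lt_mk]
    omega
  set AOf : Nat.Partition m → Finset (Fin (a + b)) :=
    fun p => Finset.image (E p) Finset.univ with hAOf
  have hAcard : ∀ p, (AOf p).card = a := by
    intro p
    rw [hAOf]
    rw [Finset.card_image_of_injective _ (hEmono p).injective, Finset.card_univ,
      Fintype.card_fin]
  have hEeq : ∀ p, ⇑((AOf p).orderEmbOfFin (hAcard p)) = E p := by
    intro p
    exact (Finset.orderEmbOfFin_unique (hAcard p)
      (fun j => Finset.mem_image_of_mem _ (Finset.mem_univ j)) (hEmono p)).symm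
  set Φ : Nat.Partition m → (Fin (a + b) → ℤ) :=
    fun p => fun i => if i ∈ AOf p then x else y with hΦ
  have hsumc : ∀ p, ∑ j : Fin a, c p j = m := by
    intro p
    have : (List.ofFn (c p)).sum = ∑ j : Fin a, c p j := List.sum_ofFn
    rw [← this, ← hLofFn, hLsum]
  have hsumE : ∀ p, ∑ j : Fin a, (((AOf p).orderEmbOfFin (hAcard p) j : ℕ) - (j : ℕ)) = m := by
    intro p
    rw [← hsumc p]
    apply Finset.sum_congr rfl
    intro j _
    rw [hEeq p]
    simp [hE]
  -- membership of the range
  have hmem : ∀ p, Φ p ∈ {r : Fin (a + b) → ℤ |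
      (∃ σ : Equiv.Perm (Fin (a + b)),
        ∀ i, r i = (fun i : Fin (a + b) => if (i : ℕ) < a then x else y) (σ i)) ∧
      revSum r = d * (m : ℤ)} := by
    intro p
    constructor
    · rw [perm_iff a b hb x y hne]
      constructor
      · intro i
        by_cases h : i ∈ AOf p <;> simp [hΦ, h]
      · have : (Finset.univ.filter fun i => Φ p i = x) = AOf p := by
          ext i
          simp only [Finset.mem_filter, Finset.mem_univ, true_and, hΦ]
          by_cases h : i ∈ AOf p <;> simp [h, hne, Ne.symm hne]
        rw [this, hAcard]
    · show revSum (Φ p) = d * (m : ℤ)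
      have := revSum_indicator a b x y hxy (AOf p) (hAcard p)
      rw [hΦ]
      rw [this, hsumE p, hd]
  -- injectivity
  have hΦinj : Function.Injective Φ := by
    intro p p' h
    have hA : AOf p = AOf p' := by
      ext i
      have := congrFun h i
      simp only [hΦ] at this
      constructor
      · intro hi
        by_contra hi'
        rw [if_pos hi, if_neg hi'] at this
        exact hne this
      · intro hi
        by_contra hi'
        rw [if_neg hi', if_pos hi] at this
        exact hne this.symm
    have hEE : E p = E p' := by
      have h1 : E p = ⇑((AOf p').orderEmbOfFin (hAcard p')) :=
        Finset.orderEmbOfFin_unique (hAcard p')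
          (fun j => hA ▸ Finset.mem_image_of_mem _ (Finset.mem_univ j)) (hEmono p)
      rw [h1, hEeq p']
    have hcc : c p = c p' := by
      funext j
      have := congrFun hEE j
      simp only [hE, Fin.mk.injEq] at this
      omega
    have hLL : L p = L p' := by rw [hLofFn, hLofFn, hcc]
    have hparts : ∀ q : Nat.Partition m,
        q.parts = Multiset.filter (fun z => 0 < z) ((L q : List ℕ) : Multiset ℕ) := by
      intro q
      simp only [hL]
      rw [← Multiset.coe_add]
      rw [Multiset.filter_add]
      have h1 : Multiset.filter (fun z => 0 < z)
          ((List.replicate (a - Multiset.card q.parts) 0 : List ℕ) : Multiset ℕ) = 0 := by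
        rw [Multiset.filter_eq_nil]
        intro z hz
        rw [List.eq_of_mem_replicate (Multiset.mem_coe.1 hz)]
        omega
      have h2 : ((q.parts.sort (· ≤ ·) : List ℕ) : Multiset ℕ) = q.parts :=
        Multiset.sort_eq _ _
      rw [h1, h2, zero_add]
      exact (Multiset.filter_eq_self.2 (fun z hz => q.parts_pos hz)).symm
    ext1
    rw [hparts p, hparts p', hLL]
  -- surjectivity onto the set
  have hsurj : ∀ r ∈ {r : Fin (a + b) → ℤ |
      (∃ σ : Equiv.Perm (Fin (a + b)),
        ∀ i, r i = (fun i : Fin (a + b) => if (i : ℕ) < a then x else y) (σ i)) ∧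
      revSum r = d * (m : ℤ)}, ∃ p, Φ p = r := by
    intro r hr
    obtain ⟨hperm, hrev⟩ := hr
    rw [perm_iff a b hb x y hne] at hperm
    obtain ⟨hval, hcard⟩ := hperm
    set A : Finset (Fin (a + b)) := Finset.univ.filter fun i => r i = x with hAdef
    have hAc : A.card = a := hcard
    have hrA : r = fun i => if i ∈ A then x else y := by
      funext i
      by_cases h : r i = x
      · rw [if_pos (by simp [hAdef, h]), h]
      · rw [if_neg (by simp [hAdef, h]), (hval i).resolve_left h]
    set e := A.orderEmbOfFin hAc with he
    have hsumN : ∑ j : Fin a, ((e j : ℕ) - (j : ℕ)) = m := by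
      have h1 : revSum r = (x - y) * ((∑ j : Fin a, ((e j : ℕ) - (j : ℕ)) : ℕ) : ℤ) := by
        rw [hrA]; exact revSum_indicator a b x y hxy A hAc
      rw [hrev, hd] at h1
      have h2 : ((∑ j : Fin a, ((e j : ℕ) - (j : ℕ)) : ℕ) : ℤ) = (m : ℤ) :=
        mul_left_cancel₀ (sub_ne_zero.2 hne) h1.symm
      exact_mod_cast h2
    have heN : StrictMono (fun j : Fin a => (e j : ℕ)) := by
      intro j k hjk
      exact e.strictMono hjk
    have hje : ∀ j : Fin a, (j : ℕ) ≤ (e j : ℕ) := self_le_strictMono heN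
    set c0 : Fin a → ℕ := fun j => (e j : ℕ) - (j : ℕ) with hc0
    have hc0mono : Monotone c0 := by
      intro j k hjk
      rcases eq_or_lt_of_le hjk with h | h
      · subst h; exact le_refl _
      · have h1 := strictMono_add_le heN ((k : ℕ) - (j : ℕ)) j k (by omega)
        have := hje j
        simp only [hc0]
        omega
    set q : Nat.Partition m :=
      ⟨Multiset.filter (fun z => 0 < z) ((List.ofFn c0 : List ℕ) : Multiset ℕ),
        fun hz => (Multiset.of_mem_filter hz),
        by
          have hsplit := Multiset.filter_add_not (fun z => 0 < z)
            ((List.ofFn c0 : List ℕ) : Multiset ℕ)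
          have hzero : (Multiset.filter (fun z => ¬ 0 < z)
              ((List.ofFn c0 : List ℕ) : Multiset ℕ)).sum = 0 := by
            apply Multiset.sum_eq_zero
            intro z hz
            have := Multiset.of_mem_filter hz
            omega
          have htot : (((List.ofFn c0 : List ℕ) : Multiset ℕ)).sum = m := by
            have : (List.ofFn c0).sum = ∑ j : Fin a, c0 j := List.sum_ofFn
            simpa [this] using hsumN
          have := congrArg Multiset.sum hsplit
          rw [Multiset.sum_add, hzero, add_zero] at this
          rw [this, htot]⟩ with hq
    refine ⟨q, ?_⟩
    -- show that the roundtrip list equals ofFn c0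
    have hLq : L q = List.ofFn c0 := by
      haveI : IsAntisymm ℕ fun x1 x2 => x1 ≤ x2 := ⟨fun _ _ => le_antisymm⟩
      refine (fun h s1 s2 => List.Perm.eq_of_pairwise' (r := fun x1 x2 => x1 ≤ x2) s1 s2 h) ?_ ?_ ?_
      · rw [← Multiset.coe_eq_coe]
        simp only [hL]
        rw [← Multiset.coe_add]
        have hqparts : q.parts = Multiset.filter (fun z => 0 < z)
            ((List.ofFn c0 : List ℕ) : Multiset ℕ) := rfl
        have hsplit := Multiset.filter_add_not (fun z => 0 < z)
          ((List.ofFn c0 : List ℕ) : Multiset ℕ)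
        have hrep : Multiset.filter (fun z => ¬ 0 < z)
            ((List.ofFn c0 : List ℕ) : Multiset ℕ)
            = Multiset.replicate (a - Multiset.card q.parts) 0 := by
          have hall : ∀ z ∈ Multiset.filter (fun z => ¬ 0 < z)
              ((List.ofFn c0 : List ℕ) : Multiset ℕ), z = 0 := by
            intro z hz
            have := Multiset.of_mem_filter hz
            omega
          have hcardz : Multiset.card (Multiset.filter (fun z => ¬ 0 < z)
              ((List.ofFn c0 : List ℕ) : Multiset ℕ)) = a - Multiset.card q.parts := by
            have := congrArg Multiset.card hsplit
            rw [Multiset.card_add] at this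
            have htotc : Multiset.card (((List.ofFn c0 : List ℕ) : Multiset ℕ)) = a := by
              simp [Multiset.coe_card]
            rw [hqparts]
            omega
          rw [← hcardz]
          exact (Multiset.eq_replicate_card).2 hall
        have hsort : ((q.parts.sort (· ≤ ·) : List ℕ) : Multiset ℕ) = q.parts :=
          Multiset.sort_eq _ _
        rw [hsort, Multiset.coe_replicate, ← hrep, hqparts, add_comm]
        exact hsplit
      · exact hLsorted q
      · rw [← List.sortedLE_iff_pairwise, List.sortedLE_ofFn_iff]
        exact hc0mono
    have hcq : c q = c0 := by
      funext j
      show (L q).getD (j : ℕ) 0 = c0 j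
      have hj : (j : ℕ) < (List.ofFn c0).length := by simp
      rw [hLq, List.getD_eq_getElem _ _ hj, List.getElem_ofFn]
    have hAq : AOf q = A := by
      have hEq : E q = fun j => e j := by
        funext j
        simp only [hE, hcq, hc0]
        apply Fin.ext
        simp only []
        have := hje j
        omega
      show Finset.image (E q) Finset.univ = A
      rw [hEq]
      exact image_orderEmbOfFin A hAc
    rw [hΦ]
    simp only [hAq]
    exact hrA.symm
  -- conclude
  have hrange : {r : Fin (a + b) → ℤ |
      (∃ σ : Equiv.Perm (Fin (a + b)),
        ∀ i, r i = (fun i : Fin (a + b) => if (i : ℕ) < a then x else y) (σ i)) ∧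
      revSum r = d * (m : ℤ)} = Set.range Φ := by
    apply Set.Subset.antisymm
    · intro r hr
      obtain ⟨p, hp⟩ := hsurj r hr
      exact ⟨p, hp⟩
    · rintro _ ⟨p, rfl⟩
      exact hmem p
  rw [hrange, ← Set.image_univ, Set.ncard_image_of_injective _ hΦinj, Set.ncard_univ,
    Nat.card_eq_fintype_card]
end
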